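/- arXiv:1302.2992 — 6 statements merged into one kernel-verified Lean document; each statement's English description precedes it below -/
import Mathlib

section
/- Let x : Σⁿ → ℝ^{n+1} be an immersed hypersurface, F : Sⁿ → ℝ⁺ smooth with A_F = D²F + F·Id, S = −dν the Weingarten operator, S_F = A_F∘S the anisotropic Weingarten operator with components s_{ij} = Σ_l (A_{il}∘ν) h_{lj}, and H_F = tr S_F the anisotropic mean curvature. Then the anisotropic Laplacian Δ_F f := div(A_F ∇f) applied to F∘ν satisfies Δ_F(F∘ν) + tr(A_F S²)·(F∘ν) + ⟨∇H_F, DF|_ν⟩ = tr(S_F²). -/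
open Finset MeasureTheory

noncomputable section

/-- Kronecker delta. -/
def kron {n : ℕ} (i j : Fin n) : ℝ := if i = j then 1 else 0

/-- Covariant derivative of a 1-tensor `T` in an orthonormal frame `{e_i}` with
directional derivatives `D i = e_i` and connection coefficients
`Γ k i j = ω_{ki}(e_j)`: `T_{i;j} = e_j(T_i) + Σ_k T_k ω_{ki}(e_j)`. -/
def cov1 {n : ℕ} {S : Type} (D : Fin n → (S → ℝ) → S → ℝ)
    (Γ : Fin n → Fin n → Fin n → S → ℝ) (T : Fin n → S → ℝ)
    (i j : Fin n) (s : S) : ℝ :=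
  D j (T i) s + ∑ k, T k s * Γ k i j s

/-- Covariant derivative of a 2-tensor. -/
def cov2 {n : ℕ} {S : Type} (D : Fin n → (S → ℝ) → S → ℝ)
    (Γ : Fin n → Fin n → Fin n → S → ℝ) (T : Fin n → Fin n → S → ℝ)
    (i j k : Fin n) (s : S) : ℝ :=
  D k (T i j) s + (∑ l, T l j s * Γ l i k s) + ∑ l, T i l s * Γ l j k s

/-- The anisotropic Laplacian `Δ_F f = div(A_F ∇ f)` in frame components. -/
def lapF {n : ℕ} {S : Type} (D : Fin n → (S → ℝ) → S → ℝ)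
    (Γ : Fin n → Fin n → Fin n → S → ℝ) (Aν : Fin n → Fin n → S → ℝ)
    (f : S → ℝ) (s : S) : ℝ :=
  ∑ i, cov1 D Γ (fun k t => ∑ l, Aν k l t * D l f t) i i s

/-- Components `s_{ij} = Σ_l (A_{il}∘ν) h_{lj}` of the anisotropic Weingarten
operator `S_F = A_F ∘ S`. -/
def sF {n : ℕ} {S : Type} (Aν h : Fin n → Fin n → S → ℝ)
    (i j : Fin n) (s : S) : ℝ :=
  ∑ l, Aν i l s * h l j s

/-- The anisotropic mean curvature `H_F = tr S_F`. -/
def HF {n : ℕ} {S : Type} (Aν h : Fin n → Fin n → S → ℝ) (s : S) : ℝ :=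
  ∑ i, sF Aν h i i s

/-- `tr(S_F²) = Σ_{i,j} s_{ij} s_{ji}`. -/
def trSF2 {n : ℕ} {S : Type} (Aν h : Fin n → Fin n → S → ℝ) (s : S) : ℝ :=
  ∑ i, ∑ j, sF Aν h i j s * sF Aν h j i s

/-- `tr(A_F S²) = Σ_{i,j,k} (A_{ik}∘ν) h_{kj} h_{ji}`. -/
def trAFS2 {n : ℕ} {S : Type} (Aν h : Fin n → Fin n → S → ℝ) (s : S) : ℝ :=
  ∑ i, ∑ j, sF Aν h i j s * h j i s

lemma Dzero {n : ℕ} {S : Type} (D : Fin n → (S → ℝ) → S → ℝ)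
    (hDadd : ∀ i (f g : S → ℝ) s, D i (fun t => f t + g t) s = D i f s + D i g s)
    (i : Fin n) (s : S) : D i (fun _ => (0:ℝ)) s = 0 := by
  have h0 := hDadd i (fun _ => 0) (fun _ => 0) s
  simp only [add_zero] at h0
  linarith

lemma Dsum {n : ℕ} {S : Type} (D : Fin n → (S → ℝ) → S → ℝ)
    (hDadd : ∀ i (f g : S → ℝ) s, D i (fun t => f t + g t) s = D i f s + D i g s)
    {ι : Type} (A : Finset ι) (f : ι → S → ℝ) (i : Fin n) (x : S) :
    D i (fun t => ∑ j ∈ A, f j t) x = ∑ j ∈ A, D i (f j) x := by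
  classical
  induction A using Finset.induction_on with
  | empty => simpa using Dzero D hDadd i x
  | insert a A' hx ih =>
      have h1 : (fun t => ∑ j ∈ insert a A', f j t)
          = fun t => f a t + ∑ j ∈ A', f j t := by
        funext t; rw [Finset.sum_insert hx]
      rw [h1, hDadd, ih, Finset.sum_insert hx]

lemma Dneg {n : ℕ} {S : Type} (D : Fin n → (S → ℝ) → S → ℝ)
    (hDadd : ∀ i (f g : S → ℝ) s, D i (fun t => f t + g t) s = D i f s + D i g s)
    (f : S → ℝ) (i : Fin n) (s : S) : D i (fun t => -(f t)) s = -(D i f s) := by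
  have h0 := hDadd i f (fun t => -(f t)) s
  simp only [add_neg_cancel] at h0
  have h1 := Dzero D hDadd i s
  linarith [h0, h1]

lemma swap3 {n : ℕ} (f : Fin n → Fin n → Fin n → ℝ) :
    ∑ i, ∑ m, ∑ l, f i m l = ∑ i, ∑ m, ∑ l, f l m i := by
  rw [Finset.sum_comm]
  refine Eq.trans (Finset.sum_congr rfl fun m _ => Finset.sum_comm ..) ?_
  rw [Finset.sum_comm]

lemma rot3a {n : ℕ} (f : Fin n → Fin n → Fin n → ℝ) :
    ∑ a, ∑ b, ∑ c, f a b c = ∑ a, ∑ b, ∑ c, f c a b := by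
  rw [Finset.sum_comm]
  refine Eq.trans (Finset.sum_congr rfl fun b _ => Finset.sum_comm ..) ?_
  rfl

lemma rot3b {n : ℕ} (f : Fin n → Fin n → Fin n → ℝ) :
    ∑ a, ∑ b, ∑ c, f a b c = ∑ a, ∑ b, ∑ c, f b c a := by
  rw [rot3a f]
  exact rot3a fun a b c => f c a b

lemma cov1neg {n : ℕ} {S : Type} (D : Fin n → (S → ℝ) → S → ℝ)
    (Γ : Fin n → Fin n → Fin n → S → ℝ)
    (hDadd : ∀ i (f g : S → ℝ) s, D i (fun t => f t + g t) s = D i f s + D i g s)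
    (T T' : Fin n → S → ℝ) (hT : ∀ k t, T' k t = -(T k t)) (i j : Fin n) (s : S) :
    cov1 D Γ T' i j s = -(cov1 D Γ T i j s) := by
  unfold cov1
  have h1 : T' i = fun t => -(T i t) := funext fun t => hT i t
  rw [h1, Dneg D hDadd]
  simp only [hT, neg_mul, Finset.sum_neg_distrib]
  ring

lemma leib {n : ℕ} {S : Type} (D : Fin n → (S → ℝ) → S → ℝ)
    (Γ : Fin n → Fin n → Fin n → S → ℝ)
    (hΓ : ∀ i j k s, Γ i j k s = -Γ j i k s)
    (hDadd : ∀ i (f g : S → ℝ) s, D i (fun t => f t + g t) s = D i f s + D i g s)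
    (hDmul : ∀ i (f g : S → ℝ) s,
      D i (fun t => f t * g t) s = D i f s * g s + f s * D i g s)
    (A : Fin n → Fin n → S → ℝ) (X : Fin n → S → ℝ) (G : Fin n → S → ℝ)
    (hG : ∀ k t, G k t = ∑ l, A k l t * X l t) (i j : Fin n) (s : S) :
    cov1 D Γ G i j s
    = (∑ l, cov2 D Γ A i l j s * X l s) + ∑ l, A i l s * cov1 D Γ X l j s := by
  unfold cov1 cov2
  have h1 : G i = fun t => ∑ l, A i l t * X l t := funext fun t => hG i t
  rw [h1, Dsum D hDadd]
  simp only [hDmul, hG, add_mul, mul_add, Finset.sum_mul, Finset.mul_sum,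
    Finset.sum_add_distrib]
  have key : (∑ l, ∑ m, A i l s * (X m s * Γ m l j s))
      = ∑ l, ∑ m, -(A i m s * Γ m l j s * X l s) := by
    rw [Finset.sum_comm]
    refine Finset.sum_congr rfl fun l _ => Finset.sum_congr rfl fun m _ => ?_
    rw [hΓ l m j s]; ring
  have key2 : (∑ k, ∑ l, A k l s * X l s * Γ k i j s)
      = ∑ l, ∑ m, A m l s * Γ m i j s * X l s := by
    rw [Finset.sum_comm]
    refine Finset.sum_congr rfl fun l _ => Finset.sum_congr rfl fun m _ => ?_
    ring
  rw [key, key2]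
  simp only [Finset.sum_neg_distrib]
  ring

lemma traceD {n : ℕ} {S : Type} (D : Fin n → (S → ℝ) → S → ℝ)
    (Γ : Fin n → Fin n → Fin n → S → ℝ)
    (hΓ : ∀ i j k s, Γ i j k s = -Γ j i k s)
    (hDadd : ∀ i (f g : S → ℝ) s, D i (fun t => f t + g t) s = D i f s + D i g s)
    (hDmul : ∀ i (f g : S → ℝ) s,
      D i (fun t => f t * g t) s = D i f s * g s + f s * D i g s)
    (A B : Fin n → Fin n → S → ℝ) (g : S → ℝ)
    (hg : ∀ t, g t = ∑ i, ∑ m, A i m t * B m i t) (j : Fin n) (s : S) :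
    D j g s
    = ∑ i, ∑ m, (cov2 D Γ A i m j s * B m i s + A i m s * cov2 D Γ B m i j s) := by
  have h1 : g = fun t => ∑ i, ∑ m, A i m t * B m i t := funext hg
  rw [h1, Dsum D hDadd]
  simp only [Dsum D hDadd, hDmul]
  unfold cov2
  simp only [add_mul, mul_add, Finset.sum_mul, Finset.mul_sum,
    Finset.sum_add_distrib]
  have T23 : (∑ i, ∑ m, ∑ l, A i l s * Γ l m j s * B m i s)
      = ∑ i, ∑ m, ∑ l, -(A i m s * (B l i s * Γ l m j s)) := by
    refine Finset.sum_congr rfl fun i _ => ?_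
    rw [Finset.sum_comm]
    refine Finset.sum_congr rfl fun m _ => Finset.sum_congr rfl fun l _ => ?_
    rw [hΓ l m j s]; ring
  have T14 : (∑ i, ∑ m, ∑ l, A l m s * Γ l i j s * B m i s)
      = ∑ i, ∑ m, ∑ l, -(A i m s * (B m l s * Γ l i j s)) := by
    rw [swap3 (fun i m l => A l m s * Γ l i j s * B m i s)]
    refine Finset.sum_congr rfl fun i _ => Finset.sum_congr rfl fun m _ =>
      Finset.sum_congr rfl fun l _ => ?_
    rw [hΓ i l j s]; ring
  rw [T23, T14]
  simp only [Finset.sum_neg_distrib]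
  ring

/-- Key Simons-type identity:
`Δ_F(F∘ν) + tr(A_F S²)·(F∘ν) + ⟨∇H_F, DF|_ν⟩ = tr(S_F²)`. -/
theorem stmt_8 (n : ℕ) (S : Type)
    (D : Fin n → (S → ℝ) → S → ℝ)
    (Γ : Fin n → Fin n → Fin n → S → ℝ)
    -- metric compatibility: `ω_{ij} = -ω_{ji}`
    (hΓ : ∀ i j k s, Γ i j k s = -Γ j i k s)
    -- `D i` is a derivation (linearity and Leibniz rule)
    (hDadd : ∀ i (f g : S → ℝ) s, D i (fun t => f t + g t) s = D i f s + D i g s)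
    (hDmul : ∀ i (f g : S → ℝ) s,
      D i (fun t => f t * g t) s = D i f s * g s + f s * D i g s)
    (h : Fin n → Fin n → S → ℝ)
    (hsymm : ∀ i j s, h i j s = h j i s)
    -- Codazzi equation `h_{ijk} = h_{ikj}`
    (hCodazzi : ∀ i j k s, cov2 D Γ h i j k s = cov2 D Γ h i k j s)
    (Fν : S → ℝ) (Fiν : Fin n → S → ℝ)
    (Aν : Fin n → Fin n → S → ℝ) (hAsymm : ∀ i j s, Aν i j s = Aν j i s)
    (AAA : Fin n → Fin n → Fin n → S → ℝ)
    -- `A_{ij,k}` is totally symmetric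
    (hAAAsymm : ∀ i j k s, AAA i j k s = AAA j i k s ∧ AAA i j k s = AAA i k j s)
    -- `(F∘ν)_i = -Σ_j h_{ij} (F_j∘ν)`
    (hFν : ∀ i s, D i Fν s = -∑ j, h i j s * Fiν j s)
    -- `(F_i∘ν)_j = -Σ_k h_{jk} (F_{ik}∘ν)`, with `F_{ik} = A_{ik} - F δ_{ik}`
    (hFiν : ∀ i j s, cov1 D Γ Fiν i j s =
      -∑ k, h j k s * (Aν i k s - Fν s * kron i k))
    -- `(A_{ij}∘ν)_k = -Σ_p (A_{ij,p}∘ν) h_{pk}`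
    (hAν : ∀ i j k s, cov2 D Γ Aν i j k s = -∑ p, AAA i j p s * h p k s)
    :
    ∀ s, lapF D Γ Aν Fν s + trAFS2 Aν h s * Fν s +
      (∑ j, D j (fun t => HF Aν h t) s * Fiν j s) = trSF2 Aν h s := by
  intro s
  classical
  set X : Fin n → S → ℝ := fun m u => ∑ j, h m j u * Fiν j u with hXdef
  have hX : ∀ m u, X m u = ∑ j, h m j u * Fiν j u := fun m u => rfl
  have hcovX : ∀ l i, cov1 D Γ X l i s
      = (∑ j, cov2 D Γ h l j i s * Fiν j s) + ∑ j, h l j s * cov1 D Γ Fiν j i s :=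
    fun l i => leib D Γ hΓ hDadd hDmul h Fiν X hX l i s
  have hGfun : ∀ k t, (∑ l, Aν k l t * D l Fν t) = -(∑ l, Aν k l t * X l t) := by
    intro k t
    rw [← Finset.sum_neg_distrib]
    refine Finset.sum_congr rfl fun l _ => ?_
    rw [hFν, hX]; ring
  have E0 : lapF D Γ Aν Fν s
      = ∑ i, -((∑ l, cov2 D Γ Aν i l i s * X l s) + ∑ l, Aν i l s * cov1 D Γ X l i s) := by
    unfold lapF
    refine Finset.sum_congr rfl fun i _ => ?_
    rw [cov1neg D Γ hDadd (fun k t => ∑ l, Aν k l t * X l t)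
      (fun k t => ∑ l, Aν k l t * D l Fν t) hGfun i i s,
      leib D Γ hΓ hDadd hDmul Aν X (fun k t => ∑ l, Aν k l t * X l t)
        (fun _ _ => rfl) i i s]
  have hHFfun : ∀ t, HF Aν h t = ∑ i, ∑ m, Aν i m t * h m i t := fun t => rfl
  have E2 : ∀ j, D j (fun t => HF Aν h t) s
      = ∑ i, ∑ m, (cov2 D Γ Aν i m j s * h m i s + Aν i m s * cov2 D Γ h m i j s) :=
    fun j => traceD D Γ hΓ hDadd hDmul Aν h (fun t => HF Aν h t) hHFfun j s
  rw [E0]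
  simp only [E2, hAν, hX, hcovX, hFiν]
  unfold trSF2 trAFS2 sF
  simp only [kron, mul_ite, mul_one, mul_zero, Finset.sum_ite_eq, Finset.mem_univ, if_true,
    mul_sub, mul_add, mul_neg, neg_mul, neg_neg, neg_add, sub_eq_add_neg,
    Finset.mul_sum, Finset.sum_mul, Finset.sum_add_distrib, Finset.sum_neg_distrib]
  simp only [add_mul, neg_mul, Finset.sum_mul, Finset.sum_add_distrib,
    Finset.sum_neg_distrib]
  have I1 : (∑ a, ∑ b, ∑ c, ∑ d, Aν a b s * (h b c s * (h a d s * Aν c d s)))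
      = ∑ a, ∑ b, ∑ c, ∑ d, Aν a d s * h d b s * (Aν b c s * h c a s) := by
    refine Finset.sum_congr rfl fun a _ => ?_
    refine Eq.trans (rot3a fun b c d => Aν a b s * (h b c s * (h a d s * Aν c d s))) ?_
    refine Finset.sum_congr rfl fun b _ => Finset.sum_congr rfl fun c _ =>
      Finset.sum_congr rfl fun d _ => ?_
    rw [hsymm a c]; ring
  have I2 : (∑ a, ∑ b, ∑ c, Aν a c s * h c b s * h b a s * Fν s)
      = ∑ a, ∑ b, ∑ c, Aν a b s * (h b c s * (h a c s * Fν s)) := by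
    refine Finset.sum_congr rfl fun a _ => ?_
    rw [Finset.sum_comm]
    refine Finset.sum_congr rfl fun b _ => Finset.sum_congr rfl fun c _ => ?_
    rw [hsymm a c]; ring
  have I3 : (∑ a, ∑ b, ∑ c, ∑ d, AAA b c d s * h d a s * h c b s * Fiν a s)
      = ∑ a, ∑ b, ∑ c, ∑ d, AAA a b d s * h d a s * (h b c s * Fiν c s) := by
    rw [Finset.sum_comm]
    refine Finset.sum_congr rfl fun a _ => ?_
    refine Eq.trans (rot3b fun b c d => AAA a c d s * h d b s * h c a s * Fiν b s) ?_
    refine Finset.sum_congr rfl fun b _ => Finset.sum_congr rfl fun c _ =>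
      Finset.sum_congr rfl fun d _ => ?_
    rw [(hAAAsymm a d b s).2]; ring
  have I4 : (∑ a, ∑ b, ∑ c, Aν b c s * cov2 D Γ h c b a s * Fiν a s)
      = ∑ a, ∑ b, ∑ c, Aν a b s * (cov2 D Γ h b c a s * Fiν c s) := by
    refine Eq.trans (rot3a fun a b c => Aν b c s * cov2 D Γ h c b a s * Fiν a s) ?_
    refine Finset.sum_congr rfl fun a _ => Finset.sum_congr rfl fun b _ =>
      Finset.sum_congr rfl fun c _ => ?_
    rw [hCodazzi b a c s]; ring
  linarith [I1, I2, I3, I4]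
end
end

section
/- With the same setup, the Gauss map ν : Σ → Sⁿ ⊂ ℝ^{n+1}, viewed as an ℝ^{n+1}-valued function on Σ, satisfies the vector-valued identity Δ_F ν + tr(A_F S²) ν + ∇H_F = 0, where ∇H_F is the tangential gradient of the anisotropic mean curvature. -/
open Finset MeasureTheory

noncomputable section

section aux
variable {n : ℕ} {S : Type} (D : Fin n → (S → ℝ) → S → ℝ)

lemma D_zero' (hDadd : ∀ i (f g : S → ℝ) s, D i (fun t => f t + g t) s = D i f s + D i g s)
    (i : Fin n) (s : S) : D i (fun _ => (0:ℝ)) s = 0 := by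
  have h := hDadd i (fun _ => 0) (fun _ => 0) s
  simp only [add_zero] at h
  linarith

lemma D_sum' (hDadd : ∀ i (f g : S → ℝ) s, D i (fun t => f t + g t) s = D i f s + D i g s)
    (i : Fin n) {ι : Type} [DecidableEq ι] (A : Finset ι) (f : ι → S → ℝ) (s : S) :
    D i (fun t => ∑ j ∈ A, f j t) s = ∑ j ∈ A, D i (f j) s := by
  induction A using Finset.induction_on with
  | empty => simpa using D_zero' D hDadd i s
  | insert a A hj ih =>
      have h1 : (fun t => ∑ j ∈ insert a A, f j t) = fun t => f a t + ∑ j ∈ A, f j t := by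
        funext t; rw [Finset.sum_insert hj]
      rw [h1, hDadd, ih, Finset.sum_insert hj]

lemma D_neg' (hDadd : ∀ i (f g : S → ℝ) s, D i (fun t => f t + g t) s = D i f s + D i g s)
    (i : Fin n) (f : S → ℝ) (s : S) : D i (fun t => -f t) s = -D i f s := by
  have h := hDadd i f (fun t => -f t) s
  simp only [add_neg_cancel] at h
  have h0 := D_zero' D hDadd i s
  rw [h0] at h
  linarith
end aux

/-- The Gauss map, viewed as an `ℝ^{n+1}`-valued function, satisfies
`Δ_F ν + tr(A_F S²) ν + ∇H_F = 0` (stated componentwise against any `w`). -/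
theorem stmt_9 (n : ℕ) (S : Type)
    (D : Fin n → (S → ℝ) → S → ℝ)
    (Γ : Fin n → Fin n → Fin n → S → ℝ)
    -- metric compatibility: `ω_{ij} = -ω_{ji}`
    (hΓ : ∀ i j k s, Γ i j k s = -Γ j i k s)
    -- `D i` is a derivation (linearity and Leibniz rule)
    (hDadd : ∀ i (f g : S → ℝ) s, D i (fun t => f t + g t) s = D i f s + D i g s)
    (hDmul : ∀ i (f g : S → ℝ) s,
      D i (fun t => f t * g t) s = D i f s * g s + f s * D i g s)
    (h : Fin n → Fin n → S → ℝ)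
    (hsymm : ∀ i j s, h i j s = h j i s)
    -- Codazzi equation `h_{ijk} = h_{ikj}`
    (hCodazzi : ∀ i j k s, cov2 D Γ h i j k s = cov2 D Γ h i k j s)
    (Fν : S → ℝ) (Fiν : Fin n → S → ℝ)
    (Aν : Fin n → Fin n → S → ℝ) (hAsymm : ∀ i j s, Aν i j s = Aν j i s)
    (AAA : Fin n → Fin n → Fin n → S → ℝ)
    -- `A_{ij,k}` is totally symmetric
    (hAAAsymm : ∀ i j k s, AAA i j k s = AAA j i k s ∧ AAA i j k s = AAA i k j s)
    -- `(F∘ν)_i = -Σ_j h_{ij} (F_j∘ν)`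
    (hFν : ∀ i s, D i Fν s = -∑ j, h i j s * Fiν j s)
    -- `(F_i∘ν)_j = -Σ_k h_{jk} (F_{ik}∘ν)`, with `F_{ik} = A_{ik} - F δ_{ik}`
    (hFiν : ∀ i j s, cov1 D Γ Fiν i j s =
      -∑ k, h j k s * (Aν i k s - Fν s * kron i k))
    -- `(A_{ij}∘ν)_k = -Σ_p (A_{ij,p}∘ν) h_{pk}`
    (hAν : ∀ i j k s, cov2 D Γ Aν i j k s = -∑ p, AAA i j p s * h p k s)
    (x ν : S → EuclideanSpace ℝ (Fin (n + 1)))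
    (e : Fin n → S → EuclideanSpace ℝ (Fin (n + 1)))
    (horth : ∀ i j s, (inner ℝ (e i s) (e j s) : ℝ) = kron i j)
    (hνunit : ∀ s, (inner ℝ (ν s) (ν s) : ℝ) = 1)
    (hνtan : ∀ i s, (inner ℝ (e i s) (ν s) : ℝ) = 0)
    -- `dx(e_i) = e_i`
    (hx : ∀ i (w : EuclideanSpace ℝ (Fin (n + 1))) s,
      D i (fun t => (inner ℝ (x t) w : ℝ)) s = inner ℝ (e i s) w)
    -- Weingarten equation `dν(e_i) = -Σ_j h_{ij} e_j`
    (hν : ∀ i (w : EuclideanSpace ℝ (Fin (n + 1))) s,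
      D i (fun t => (inner ℝ (ν t) w : ℝ)) s = -∑ j, h i j s * (inner ℝ (e j s) w : ℝ))
    -- Gauss formula `de_i(e_j) = Σ_k ω_{ik}(e_j) e_k + h_{ij} ν`
    (he : ∀ i j (w : EuclideanSpace ℝ (Fin (n + 1))) s,
      D j (fun t => (inner ℝ (e i t) w : ℝ)) s =
        (∑ k, Γ i k j s * (inner ℝ (e k s) w : ℝ)) + h i j s * (inner ℝ (ν s) w : ℝ))
    :
    ∀ (w : EuclideanSpace ℝ (Fin (n + 1))) s,
      lapF D Γ Aν (fun t => (inner ℝ (ν t) w : ℝ)) s +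
        trAFS2 Aν h s * (inner ℝ (ν s) w : ℝ) +
        (∑ j, D j (fun t => HF Aν h t) s * (inner ℝ (e j s) w : ℝ)) = 0 := by
  intro w s
  have hDsum : ∀ (i : Fin n) (f : Fin n → S → ℝ) (s : S),
      D i (fun t => ∑ j, f j t) s = ∑ j, D i (f j) s :=
    fun i f s => D_sum' D hDadd i univ f s
  have hDneg : ∀ (i : Fin n) (f : S → ℝ) (s : S), D i (fun t => -f t) s = -D i f s :=
    fun i f s => D_neg' D hDadd i f s
  -- pointwise form of the anisotropic gradient
  have hVs : ∀ (i : Fin n) (t : S),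
      (∑ l, Aν i l t * D l (fun u => (inner ℝ (ν u) w : ℝ)) t)
        = -∑ j, sF Aν h i j t * (inner ℝ (e j t) w : ℝ) := by
    intro i t
    simp only [hν, mul_neg, Finset.mul_sum, ← Finset.sum_neg_distrib]
    rw [Finset.sum_comm]
    refine Finset.sum_congr rfl (fun j _ => ?_)
    simp only [sF, Finset.sum_mul, Finset.sum_neg_distrib]
    congr 1
    exact Finset.sum_congr rfl (fun l _ => by ring)
  have hV : ∀ i : Fin n,
      (fun t => ∑ l, Aν i l t * D l (fun u => (inner ℝ (ν u) w : ℝ)) t)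
        = (fun t => -∑ j, sF Aν h i j t * (inner ℝ (e j t) w : ℝ)) :=
    fun i => funext (hVs i)
  -- per-index Leibniz identity for the divergence
  have main : ∀ i : Fin n,
      cov1 D Γ (fun k t => ∑ l, Aν k l t * D l (fun u => (inner ℝ (ν u) w : ℝ)) t) i i s
        = -∑ j, cov2 D Γ (sF Aν h) i j i s * (inner ℝ (e j s) w : ℝ)
          - (∑ j, sF Aν h i j s * h j i s) * (inner ℝ (ν s) w : ℝ) := by
    intro i
    simp only [cov1, hVs, cov2]
    rw [hDneg, hDsum]
    simp only [hDmul, he]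
    have E2 : ∑ x, sF Aν h i x s * ∑ k, Γ x k i s * (inner ℝ (e k s) w : ℝ)
        = ∑ x, (∑ l, sF Aν h i l s * Γ l x i s) * (inner ℝ (e x s) w : ℝ) := by
      simp only [Finset.mul_sum, Finset.sum_mul]
      rw [Finset.sum_comm]
      exact Finset.sum_congr rfl fun x _ => Finset.sum_congr rfl fun k _ => by ring
    have E3 : ∑ x, sF Aν h i x s * (h x i s * (inner ℝ (ν s) w : ℝ))
        = (∑ j, sF Aν h i j s * h j i s) * (inner ℝ (ν s) w : ℝ) := by
      rw [Finset.sum_mul]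
      exact Finset.sum_congr rfl fun x _ => by ring
    have E4 : ∑ x, (∑ j, sF Aν h x j s * (inner ℝ (e j s) w : ℝ)) * Γ x i i s
        = ∑ x, (∑ l, sF Aν h l x s * Γ l i i s) * (inner ℝ (e x s) w : ℝ) := by
      simp only [Finset.sum_mul]
      rw [Finset.sum_comm]
      exact Finset.sum_congr rfl fun x _ => Finset.sum_congr rfl fun k _ => by ring
    simp only [mul_add, add_mul, Finset.sum_add_distrib, neg_mul, mul_neg,
      Finset.sum_neg_distrib, neg_add]
    rw [E2, E3, E4]
    ring
  have key : lapF D Γ Aν (fun t => (inner ℝ (ν t) w : ℝ)) s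
      = -∑ j, (∑ i, cov2 D Γ (sF Aν h) i j i s) * (inner ℝ (e j s) w : ℝ)
        - trAFS2 Aν h s * (inner ℝ (ν s) w : ℝ) := by
    simp only [lapF, main]
    rw [Finset.sum_sub_distrib]
    congr 1
    · rw [Finset.sum_neg_distrib, neg_inj, Finset.sum_comm]
      exact Finset.sum_congr rfl fun j _ => (Finset.sum_mul _ _ _).symm
    · rw [trAFS2, Finset.sum_mul]
  have leib : ∀ i j k : Fin n,
      cov2 D Γ (sF Aν h) i j k s
        = ∑ l, cov2 D Γ Aν i l k s * h l j s + ∑ l, Aν i l s * cov2 D Γ h l j k s := by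
    intro i j k
    have hD1 : D k (sF Aν h i j) s
        = ∑ m, (D k (Aν i m) s * h m j s + Aν i m s * D k (h m j) s) := by
      rw [show (sF Aν h i j) = (fun t => ∑ m, Aν i m t * h m j t) from rfl, hDsum]
      exact Finset.sum_congr rfl fun m _ => hDmul k (Aν i m) (h m j) s
    have E3 : ∑ l, sF Aν h l j s * Γ l i k s
        = ∑ l, (∑ m, Aν m l s * Γ m i k s) * h l j s := by
      simp only [sF, Finset.sum_mul]
      rw [Finset.sum_comm]
      exact Finset.sum_congr rfl fun l _ => Finset.sum_congr rfl fun m _ => by ring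
    have E4 : ∑ l, sF Aν h i l s * Γ l j k s
        = ∑ l, Aν i l s * ∑ m, h l m s * Γ m j k s := by
      simp only [sF, Finset.sum_mul, Finset.mul_sum]
      rw [Finset.sum_comm]
      exact Finset.sum_congr rfl fun l _ => Finset.sum_congr rfl fun m _ => by ring
    have E5 : ∑ l, (∑ m, Aν i m s * Γ m l k s) * h l j s
        + ∑ l, Aν i l s * ∑ m, h m j s * Γ m l k s = 0 := by
      have h1 : ∑ l, (∑ m, Aν i m s * Γ m l k s) * h l j s
          = ∑ l, ∑ m, Aν i m s * Γ m l k s * h l j s := by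
        simp only [Finset.sum_mul]
      have h2 : ∑ l, Aν i l s * ∑ m, h m j s * Γ m l k s
          = ∑ l, ∑ m, -(Aν i m s * Γ m l k s * h l j s) := by
        simp only [Finset.mul_sum]
        rw [Finset.sum_comm]
        refine Finset.sum_congr rfl fun l _ => Finset.sum_congr rfl fun m _ => ?_
        rw [hΓ l m k]
        ring
      simp only [Finset.sum_neg_distrib] at h2
      rw [h1, h2]
      ring
    simp only [cov2, hD1, add_mul, mul_add, Finset.sum_add_distrib]
    rw [E3, E4]
    linear_combination -E5
  have trace : ∀ j : Fin n, D j (fun t => HF Aν h t) s = ∑ i, cov2 D Γ (sF Aν h) i i j s := by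
    intro j
    rw [show (fun t => HF Aν h t) = (fun t => ∑ i, sF Aν h i i t) from rfl, hDsum]
    simp only [cov2, Finset.sum_add_distrib]
    have cancel : ∑ i, ∑ l, sF Aν h i l s * Γ l i j s
        = ∑ i, ∑ l, -(sF Aν h l i s * Γ l i j s) := by
      rw [Finset.sum_comm]
      refine Finset.sum_congr rfl fun i _ => Finset.sum_congr rfl fun l _ => ?_
      rw [hΓ i l j]
      ring
    simp only [Finset.sum_neg_distrib] at cancel
    linear_combination -cancel
  have key2 : ∀ j : Fin n, ∑ i, cov2 D Γ (sF Aν h) i j i s = D j (fun t => HF Aν h t) s := by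
    intro j
    rw [trace j]
    simp only [leib, Finset.sum_add_distrib]
    congr 1
    · simp only [hAν, neg_mul, Finset.sum_mul, Finset.sum_neg_distrib]
      rw [neg_inj]
      refine Finset.sum_congr rfl fun i _ => ?_
      rw [Finset.sum_comm]
      refine Finset.sum_congr rfl fun l _ => Finset.sum_congr rfl fun p _ => ?_
      rw [(hAAAsymm i p l s).2]
      ring
    · exact Finset.sum_congr rfl fun i _ => Finset.sum_congr rfl fun l _ => by
        rw [hCodazzi l j i]
  rw [key]
  have hfin : ∑ j, D j (fun t => HF Aν h t) s * (inner ℝ (e j s) w : ℝ)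
      = ∑ j, (∑ i, cov2 D Γ (sF Aν h) i j i s) * (inner ℝ (e j s) w : ℝ) :=
    Finset.sum_congr rfl (fun j _ => by rw [key2 j])
  rw [hfin]
  ring
end
end

section
/- With the same setup, the support function p = ⟨x, ν⟩ of an immersed closed oriented hypersurface satisfies Δ_F p + tr(A_F S²) p + H_F + ⟨x, ∇H_F⟩ = 0. In particular, if H_F is constant then Δ_F p + tr(A_F S²) p + H_F = 0. -/
open Finset MeasureTheory

noncomputable section

section helpers
variable {n : ℕ}

lemma sum_swap12 (F : Fin n → Fin n → Fin n → ℝ) :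
    ∑ i, ∑ l, ∑ r, F i l r = ∑ i, ∑ l, ∑ r, F l i r := Finset.sum_comm

lemma sum_swap23 (F : Fin n → Fin n → Fin n → ℝ) :
    ∑ i, ∑ l, ∑ r, F i l r = ∑ i, ∑ l, ∑ r, F i r l :=
  Finset.sum_congr rfl fun _ _ => Finset.sum_comm

lemma sum_cycle1 (F : Fin n → Fin n → Fin n → ℝ) :
    ∑ i, ∑ l, ∑ r, F i l r = ∑ i, ∑ l, ∑ r, F l r i := by
  rw [sum_swap23 F]; exact sum_swap12 (fun i l r => F i r l)

lemma sum_cycle2 (F : Fin n → Fin n → Fin n → ℝ) :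
    ∑ i, ∑ l, ∑ r, F i l r = ∑ i, ∑ l, ∑ r, F r i l := by
  rw [sum_swap12 F]; exact sum_swap23 (fun i l r => F l i r)

lemma pull1 (F : Fin n → Fin n → ℝ) (Q : Fin n → ℝ) :
    ∑ i, ∑ r, F i r * Q r = ∑ r, (∑ i, F i r) * Q r := by
  rw [Finset.sum_comm]
  exact Finset.sum_congr rfl fun r _ => (Finset.sum_mul _ _ _).symm

lemma pull3 (F : Fin n → Fin n → Fin n → ℝ) (Q : Fin n → ℝ) :
    ∑ i, ∑ l, ∑ r, F i l r * Q r = ∑ r, (∑ i, ∑ l, F i l r) * Q r := by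
  calc ∑ i, ∑ l, ∑ r, F i l r * Q r = ∑ i, ∑ r, (∑ l, F i l r) * Q r :=
        Finset.sum_congr rfl fun i _ => pull1 (F i) Q
    _ = ∑ r, (∑ i, ∑ l, F i l r) * Q r := by
        rw [pull1 (fun i r => ∑ l, F i l r) Q]

lemma pull4 (F : Fin n → Fin n → Fin n → Fin n → ℝ) (Q : Fin n → ℝ) :
    ∑ i, ∑ l, ∑ r, ∑ u, F i l r u * Q u = ∑ u, (∑ i, ∑ l, ∑ r, F i l r u) * Q u := by
  calc ∑ i, ∑ l, ∑ r, ∑ u, F i l r u * Q u = ∑ i, ∑ u, (∑ l, ∑ r, F i l r u) * Q u :=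
        Finset.sum_congr rfl fun i _ => pull3 (F i) Q
    _ = ∑ u, (∑ i, ∑ l, ∑ r, F i l r u) * Q u := by
        rw [pull1 (fun i u => ∑ l, ∑ r, F i l r u) Q]

lemma alg_key (a c : Fin n → Fin n → ℝ) (b d g A3 : Fin n → Fin n → Fin n → ℝ)
    (ha : ∀ i j, a i j = a j i) (hc : ∀ i j, c i j = c j i)
    (hg : ∀ i j k, g i j k = -g j i k)
    (hA2 : ∀ i j k, A3 i j k = A3 i k j)
    (hb : ∀ i j k, b i j k = -(∑ p, A3 i j p * c p k) - (∑ l, a l j * g l i k)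
        - ∑ l, a i l * g l j k)
    (hd : ∀ i j k, d i j k = d i k j + (∑ l, c l k * g l i j) + (∑ l, c i l * g l k j)
        - (∑ l, c l j * g l i k) - ∑ l, c i l * g l j k)
    (m : Fin n) :
    ∑ i, ∑ l, (b i l m * c l i + a i l * d l i m)
      = (∑ i, ∑ l, b i l i * c l m) + (∑ i, ∑ l, a i l * d l m i)
        + (∑ i, ∑ l, ∑ r, a i l * c l r * g r m i)
        + (∑ i, ∑ l, ∑ r, a r l * c l m * g r i i) := by
  have e1 : ∑ i, ∑ l, b i l m * c l i
      = -(∑ i, ∑ l, ∑ p, A3 i l p * c p m * c l i)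
        - (∑ i, ∑ l, ∑ r, a r l * g r i m * c l i)
        - (∑ i, ∑ l, ∑ r, a i r * g r l m * c l i) := by
    have : ∀ i l : Fin n, b i l m * c l i
        = -(∑ p, A3 i l p * c p m * c l i) - (∑ r, a r l * g r i m * c l i)
          - ∑ r, a i r * g r l m * c l i := by
      intro i l
      rw [hb, sub_mul, sub_mul, neg_mul, Finset.sum_mul, Finset.sum_mul, Finset.sum_mul]
    simp only [this, Finset.sum_sub_distrib, Finset.sum_neg_distrib]
  have e3 : ∑ i, ∑ l, b i l i * c l m
      = -(∑ i, ∑ l, ∑ p, A3 i l p * c p i * c l m)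
        - (∑ i, ∑ l, ∑ r, a r l * g r i i * c l m)
        - (∑ i, ∑ l, ∑ r, a i r * g r l i * c l m) := by
    have : ∀ i l : Fin n, b i l i * c l m
        = -(∑ p, A3 i l p * c p i * c l m) - (∑ r, a r l * g r i i * c l m)
          - ∑ r, a i r * g r l i * c l m := by
      intro i l
      rw [hb, sub_mul, sub_mul, neg_mul, Finset.sum_mul, Finset.sum_mul, Finset.sum_mul]
    simp only [this, Finset.sum_sub_distrib, Finset.sum_neg_distrib]
  have e2 : ∑ i, ∑ l, a i l * d l i m
      = (∑ i, ∑ l, a i l * d l m i)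
        + (∑ i, ∑ l, ∑ r, a i l * (c r m * g r l i))
        + (∑ i, ∑ l, ∑ r, a i l * (c l r * g r m i))
        - (∑ i, ∑ l, ∑ r, a i l * (c r i * g r l m))
        - (∑ i, ∑ l, ∑ r, a i l * (c l r * g r i m)) := by
    have : ∀ i l : Fin n, a i l * d l i m
        = a i l * d l m i + (∑ r, a i l * (c r m * g r l i)) + (∑ r, a i l * (c l r * g r m i))
          - (∑ r, a i l * (c r i * g r l m)) - ∑ r, a i l * (c l r * g r i m) := by
      intro i l
      rw [hd l i m, mul_sub, mul_sub, mul_add, mul_add, Finset.mul_sum, Finset.mul_sum,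
        Finset.mul_sum, Finset.mul_sum]
    simp only [this, Finset.sum_sub_distrib, Finset.sum_add_distrib]
  have X1 : (∑ i, ∑ l, ∑ p, A3 i l p * c p m * c l i)
      = ∑ i, ∑ l, ∑ p, A3 i l p * c p i * c l m := by
    rw [sum_swap23 (fun i l p => A3 i l p * c p m * c l i)]
    refine Finset.sum_congr rfl fun i _ => Finset.sum_congr rfl fun l _ =>
      Finset.sum_congr rfl fun p _ => ?_
    rw [hA2 i l p]; ring
  have X2 : (∑ i, ∑ l, ∑ r, a r l * g r i m * c l i)
      + (∑ i, ∑ l, ∑ r, a i l * (c r i * g r l m)) = 0 := by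
    rw [sum_cycle1 (fun i l r => a i l * (c r i * g r l m))]
    rw [← Finset.sum_add_distrib]
    refine Finset.sum_eq_zero fun i _ => ?_
    rw [← Finset.sum_add_distrib]
    refine Finset.sum_eq_zero fun l _ => ?_
    rw [← Finset.sum_add_distrib]
    refine Finset.sum_eq_zero fun r _ => ?_
    rw [ha l r, hc i l, hg i r m]; ring
  have X3 : (∑ i, ∑ l, ∑ r, a i r * g r l m * c l i)
      + (∑ i, ∑ l, ∑ r, a i l * (c l r * g r i m)) = 0 := by
    rw [sum_cycle2 (fun i l r => a i l * (c l r * g r i m))]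
    rw [← Finset.sum_add_distrib]
    refine Finset.sum_eq_zero fun i _ => ?_
    rw [← Finset.sum_add_distrib]
    refine Finset.sum_eq_zero fun l _ => ?_
    rw [← Finset.sum_add_distrib]
    refine Finset.sum_eq_zero fun r _ => ?_
    rw [ha r i, hc i l, hg l r m]; ring
  have X4 : (∑ i, ∑ l, ∑ r, a i l * (c r m * g r l i))
      + (∑ i, ∑ l, ∑ r, a i r * g r l i * c l m) = 0 := by
    rw [sum_swap23 (fun i l r => a i l * (c r m * g r l i))]
    rw [← Finset.sum_add_distrib]
    refine Finset.sum_eq_zero fun i _ => ?_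
    rw [← Finset.sum_add_distrib]
    refine Finset.sum_eq_zero fun l _ => ?_
    rw [← Finset.sum_add_distrib]
    refine Finset.sum_eq_zero fun r _ => ?_
    rw [hg l r i]; ring
  have X5 : (∑ i, ∑ l, ∑ r, a i l * (c l r * g r m i))
      = ∑ i, ∑ l, ∑ r, a i l * c l r * g r m i := by
    refine Finset.sum_congr rfl fun i _ => Finset.sum_congr rfl fun l _ =>
      Finset.sum_congr rfl fun r _ => by ring
  have X6 : (∑ i, ∑ l, ∑ r, a r l * g r i i * c l m)
      = ∑ i, ∑ l, ∑ r, a r l * c l m * g r i i := by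
    refine Finset.sum_congr rfl fun i _ => Finset.sum_congr rfl fun l _ =>
      Finset.sum_congr rfl fun r _ => by ring
  have base : ∑ i, ∑ l, (b i l m * c l i + a i l * d l i m)
      = (∑ i, ∑ l, b i l m * c l i) + ∑ i, ∑ l, a i l * d l i m := by
    simp only [Finset.sum_add_distrib]
  rw [base, e1, e2, e3]
  linarith [X1, X2, X3, X4, X5, X6]

lemma alg_main (a c : Fin n → Fin n → ℝ) (b d g A3 : Fin n → Fin n → Fin n → ℝ)
    (P : ℝ) (Q : Fin n → ℝ)
    (ha : ∀ i j, a i j = a j i) (hc : ∀ i j, c i j = c j i)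
    (hg : ∀ i j k, g i j k = -g j i k)
    (hA2 : ∀ i j k, A3 i j k = A3 i k j)
    (hb : ∀ i j k, b i j k = -(∑ p, A3 i j p * c p k) - (∑ l, a l j * g l i k)
        - ∑ l, a i l * g l j k)
    (hd : ∀ i j k, d i j k = d i k j + (∑ l, c l k * g l i j) + (∑ l, c i l * g l k j)
        - (∑ l, c l j * g l i k) - ∑ l, c i l * g l j k) :
    (∑ i, ((∑ l, (b i l i * -(∑ r, c l r * Q r)
        + a i l * -(∑ r, (d l r i * Q r
            + c l r * (kron i r + (∑ u, g r u i * Q u) + c r i * P)))))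
      + ∑ k, (∑ l, a k l * -(∑ r, c l r * Q r)) * g k i i))
    + (∑ i, ∑ j, (∑ l, a i l * c l j) * c j i) * P
    + (∑ i, ∑ l, a i l * c l i)
    + (∑ j, ((∑ i, ∑ l, (b i l j * c l i + a i l * d l i j)) * Q j)) = 0 := by
  have A1 : ∑ i, ∑ l, ∑ r, b i l i * (c l r * Q r)
      = ∑ r, (∑ i, ∑ l, b i l i * c l r) * Q r := by
    rw [← pull3 (fun i l r => b i l i * c l r) Q]
    exact Finset.sum_congr rfl fun i _ => Finset.sum_congr rfl fun l _ =>
      Finset.sum_congr rfl fun r _ => by ring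
  have A2 : ∑ i, ∑ l, ∑ r, a i l * (d l r i * Q r)
      = ∑ r, (∑ i, ∑ l, a i l * d l r i) * Q r := by
    rw [← pull3 (fun i l r => a i l * d l r i) Q]
    exact Finset.sum_congr rfl fun i _ => Finset.sum_congr rfl fun l _ =>
      Finset.sum_congr rfl fun r _ => by ring
  have A3' : ∑ i, ∑ l, ∑ r, ∑ u, a i l * (c l r * (g r u i * Q u))
      = ∑ u, (∑ i, ∑ l, ∑ r, a i l * c l r * g r u i) * Q u := by
    rw [← pull4 (fun i l r u => a i l * c l r * g r u i) Q]
    exact Finset.sum_congr rfl fun i _ => Finset.sum_congr rfl fun l _ =>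
      Finset.sum_congr rfl fun r _ => Finset.sum_congr rfl fun u _ => by ring
  have A4 : ∑ i, ∑ k, ∑ l, ∑ r, a k l * (c l r * Q r) * g k i i
      = ∑ r, (∑ i, ∑ l, ∑ u, a u l * c l r * g u i i) * Q r := by
    calc ∑ i, ∑ k, ∑ l, ∑ r, a k l * (c l r * Q r) * g k i i
        = ∑ i, ∑ k, ∑ l, ∑ r, (a k l * c l r * g k i i) * Q r :=
          Finset.sum_congr rfl fun i _ => Finset.sum_congr rfl fun k _ =>
            Finset.sum_congr rfl fun l _ => Finset.sum_congr rfl fun r _ => by ring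
      _ = ∑ r, (∑ i, ∑ k, ∑ l, a k l * c l r * g k i i) * Q r :=
          pull4 (fun i k l r => a k l * c l r * g k i i) Q
      _ = ∑ r, (∑ i, ∑ l, ∑ u, a u l * c l r * g u i i) * Q r := by
          refine Finset.sum_congr rfl fun r _ => ?_
          congr 1
          exact Finset.sum_congr rfl fun i _ => Finset.sum_comm
  have A5 : ∑ i, ∑ l, ∑ r, a i l * (c l r * (c r i * P))
      = ∑ i, ∑ l, ∑ r, a i r * c r l * c l i * P := by
    rw [sum_swap23 (fun i l r => a i l * (c l r * (c r i * P)))]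
    exact Finset.sum_congr rfl fun i _ => Finset.sum_congr rfl fun l _ =>
      Finset.sum_congr rfl fun r _ => by ring
  have A6 : ∀ j : Fin n, (∑ i, ∑ l, b i l j * c l i) + (∑ i, ∑ l, a i l * d l i j)
      = (∑ i, ∑ l, b i l i * c l j) + (∑ i, ∑ l, a i l * d l j i)
        + (∑ i, ∑ l, ∑ r, a i l * c l r * g r j i)
        + (∑ i, ∑ l, ∑ r, a r l * c l j * g r i i) := by
    intro j
    have hk := alg_key a c b d g A3 ha hc hg hA2 hb hd j
    simp only [Finset.sum_add_distrib] at hk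
    exact hk
  have A7 : ∑ j, (((∑ i, ∑ l, b i l j * c l i) + (∑ i, ∑ l, a i l * d l i j)) * Q j)
      = (∑ j, (∑ i, ∑ l, b i l i * c l j) * Q j)
        + (∑ j, (∑ i, ∑ l, a i l * d l j i) * Q j)
        + (∑ j, (∑ i, ∑ l, ∑ r, a i l * c l r * g r j i) * Q j)
        + (∑ j, (∑ i, ∑ l, ∑ r, a r l * c l j * g r i i) * Q j) := by
    have point : ∀ j : Fin n, ((∑ i, ∑ l, b i l j * c l i) + (∑ i, ∑ l, a i l * d l i j)) * Q j
        = (∑ i, ∑ l, b i l i * c l j) * Q j + (∑ i, ∑ l, a i l * d l j i) * Q j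
          + (∑ i, ∑ l, ∑ r, a i l * c l r * g r j i) * Q j
          + (∑ i, ∑ l, ∑ r, a r l * c l j * g r i i) * Q j := by
      intro j; rw [A6 j]; ring
    calc ∑ j, (((∑ i, ∑ l, b i l j * c l i) + (∑ i, ∑ l, a i l * d l i j)) * Q j)
        = ∑ j, ((∑ i, ∑ l, b i l i * c l j) * Q j + (∑ i, ∑ l, a i l * d l j i) * Q j
          + (∑ i, ∑ l, ∑ r, a i l * c l r * g r j i) * Q j
          + (∑ i, ∑ l, ∑ r, a r l * c l j * g r i i) * Q j) :=
          Finset.sum_congr rfl fun j _ => point j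
      _ = _ := by simp only [Finset.sum_add_distrib]
  simp only [mul_add, mul_neg, neg_mul, Finset.mul_sum, Finset.sum_mul, Finset.sum_add_distrib,
    Finset.sum_neg_distrib, kron, mul_ite, mul_one, mul_zero, Finset.sum_ite_eq,
    Finset.mem_univ, if_true]
  linarith [A1, A2, A3', A4, A5, A7]
end helpers

/-- The support function `p = ⟨x,ν⟩` satisfies
`Δ_F p + tr(A_F S²) p + H_F + ⟨x, ∇H_F⟩ = 0`; in particular, when `H_F` is
constant, `Δ_F p + tr(A_F S²) p + H_F = 0`. -/


theorem stmt_10 (n : ℕ) (S : Type)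
    (D : Fin n → (S → ℝ) → S → ℝ)
    (Γ : Fin n → Fin n → Fin n → S → ℝ)
    -- metric compatibility: `ω_{ij} = -ω_{ji}`
    (hΓ : ∀ i j k s, Γ i j k s = -Γ j i k s)
    -- `D i` is a derivation (linearity and Leibniz rule)
    (hDadd : ∀ i (f g : S → ℝ) s, D i (fun t => f t + g t) s = D i f s + D i g s)
    (hDmul : ∀ i (f g : S → ℝ) s,
      D i (fun t => f t * g t) s = D i f s * g s + f s * D i g s)
    (h : Fin n → Fin n → S → ℝ)
    (hsymm : ∀ i j s, h i j s = h j i s)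
    -- Codazzi equation `h_{ijk} = h_{ikj}`
    (hCodazzi : ∀ i j k s, cov2 D Γ h i j k s = cov2 D Γ h i k j s)
    (Fν : S → ℝ) (Fiν : Fin n → S → ℝ)
    (Aν : Fin n → Fin n → S → ℝ) (hAsymm : ∀ i j s, Aν i j s = Aν j i s)
    (AAA : Fin n → Fin n → Fin n → S → ℝ)
    -- `A_{ij,k}` is totally symmetric
    (hAAAsymm : ∀ i j k s, AAA i j k s = AAA j i k s ∧ AAA i j k s = AAA i k j s)
    -- `(F∘ν)_i = -Σ_j h_{ij} (F_j∘ν)`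
    (hFν : ∀ i s, D i Fν s = -∑ j, h i j s * Fiν j s)
    -- `(F_i∘ν)_j = -Σ_k h_{jk} (F_{ik}∘ν)`, with `F_{ik} = A_{ik} - F δ_{ik}`
    (hFiν : ∀ i j s, cov1 D Γ Fiν i j s =
      -∑ k, h j k s * (Aν i k s - Fν s * kron i k))
    -- `(A_{ij}∘ν)_k = -Σ_p (A_{ij,p}∘ν) h_{pk}`
    (hAν : ∀ i j k s, cov2 D Γ Aν i j k s = -∑ p, AAA i j p s * h p k s)
    (x ν : S → EuclideanSpace ℝ (Fin (n + 1)))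
    (e : Fin n → S → EuclideanSpace ℝ (Fin (n + 1)))
    (horth : ∀ i j s, (inner ℝ (e i s) (e j s) : ℝ) = kron i j)
    (hνunit : ∀ s, (inner ℝ (ν s) (ν s) : ℝ) = 1)
    (hνtan : ∀ i s, (inner ℝ (e i s) (ν s) : ℝ) = 0)
    -- `dx(e_i) = e_i`
    (hx : ∀ i (w : EuclideanSpace ℝ (Fin (n + 1))) s,
      D i (fun t => (inner ℝ (x t) w : ℝ)) s = inner ℝ (e i s) w)
    -- Weingarten equation `dν(e_i) = -Σ_j h_{ij} e_j`
    (hν : ∀ i (w : EuclideanSpace ℝ (Fin (n + 1))) s,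
      D i (fun t => (inner ℝ (ν t) w : ℝ)) s = -∑ j, h i j s * (inner ℝ (e j s) w : ℝ))
    -- Gauss formula `de_i(e_j) = Σ_k ω_{ik}(e_j) e_k + h_{ij} ν`
    (he : ∀ i j (w : EuclideanSpace ℝ (Fin (n + 1))) s,
      D j (fun t => (inner ℝ (e i t) w : ℝ)) s =
        (∑ k, Γ i k j s * (inner ℝ (e k s) w : ℝ)) + h i j s * (inner ℝ (ν s) w : ℝ))
    :
    (∀ s, lapF D Γ Aν (fun t => (inner ℝ (x t) (ν t) : ℝ)) s +
        trAFS2 Aν h s * (inner ℝ (x s) (ν s) : ℝ) + HF Aν h s +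
        (∑ j, D j (fun t => HF Aν h t) s * (inner ℝ (x s) (e j s) : ℝ)) = 0) ∧
      ((∀ i s, D i (fun t => HF Aν h t) s = 0) →
        ∀ s, lapF D Γ Aν (fun t => (inner ℝ (x t) (ν t) : ℝ)) s +
          trAFS2 Aν h s * (inner ℝ (x s) (ν s) : ℝ) + HF Aν h s = 0) := by
  classical
  -- analytic primitives
  have hinner : ∀ u v : EuclideanSpace ℝ (Fin (n+1)), (inner ℝ u v : ℝ) = ∑ a, u a * v a := by
    intro u v; simp [PiLp.inner_apply, RCLike.inner_apply, mul_comm]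
  have Dzero : ∀ i s, D i (fun _ => (0:ℝ)) s = 0 := by
    intro i s
    have := hDadd i (fun _ => 0) (fun _ => 0) s
    simp only [add_zero] at this
    linarith
  have Dneg : ∀ i (f : S → ℝ) s, D i (fun t => -f t) s = -D i f s := by
    intro i f s
    have h1 := hDadd i f (fun t => -f t) s
    simp only [add_neg_cancel] at h1
    rw [Dzero] at h1
    linarith
  have Dsum : ∀ (i : Fin n) (α : Type) (A : Finset α) (f : α → S → ℝ) (s : S),
      D i (fun t => ∑ a ∈ A, f a t) s = ∑ a ∈ A, D i (fun t => f a t) s := by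
    intro i α A
    induction A using Finset.cons_induction_on with
    | empty => intro f s; simpa using Dzero i s
    | cons b B hnotmem ih =>
        intro f s
        have heq : (fun t => ∑ a ∈ Finset.cons b B hnotmem, f a t)
            = fun t => f b t + ∑ a ∈ B, f a t := by
          funext t; rw [Finset.sum_cons]
        rw [heq, hDadd, ih, Finset.sum_cons]
  have hx' : ∀ i a s, D i (fun t => x t a) s = e i s a := by
    intro i a s
    have := hx i (EuclideanSpace.single a 1) s
    simpa [EuclideanSpace.inner_single_right] using this
  have hν' : ∀ i a s, D i (fun t => ν t a) s = -∑ j, h i j s * e j s a := by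
    intro i a s
    have := hν i (EuclideanSpace.single a 1) s
    simpa [EuclideanSpace.inner_single_right] using this
  have he' : ∀ i j a s, D j (fun t => e i t a) s =
      (∑ k, Γ i k j s * e k s a) + h i j s * ν s a := by
    intro i j a s
    have := he i j (EuclideanSpace.single a 1) s
    simpa [EuclideanSpace.inner_single_right] using this
  have hpfun : (fun t => (inner ℝ (x t) (ν t) : ℝ)) = fun t => ∑ a, x t a * ν t a := by
    funext t; exact hinner _ _
  have hDp : ∀ j s, D j (fun t => (inner ℝ (x t) (ν t) : ℝ)) s
      = -∑ k, h j k s * (inner ℝ (x s) (e k s) : ℝ) := by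
    intro j s
    rw [hpfun, Dsum]
    have step : ∀ a, D j (fun t => x t a * ν t a) s
        = e j s a * ν s a + x s a * -∑ k, h j k s * e k s a := by
      intro a; rw [hDmul, hx', hν']
    rw [Finset.sum_congr rfl fun a _ => step a, Finset.sum_add_distrib]
    have t1 : ∑ a, e j s a * ν s a = 0 := by rw [← hinner]; exact hνtan j s
    have t2 : ∑ a, x s a * -∑ k, h j k s * e k s a
        = -∑ k, h j k s * (inner ℝ (x s) (e k s) : ℝ) := by
      simp only [mul_neg, Finset.sum_neg_distrib, Finset.mul_sum]
      rw [Finset.sum_comm]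
      congr 1
      refine Finset.sum_congr rfl fun k _ => ?_
      rw [hinner, Finset.mul_sum]
      exact Finset.sum_congr rfl fun a _ => by ring
    rw [t1, t2, zero_add]
  have hDq : ∀ i m s, D i (fun t => (inner ℝ (x t) (e m t) : ℝ)) s
      = kron i m + (∑ l, Γ m l i s * (inner ℝ (x s) (e l s) : ℝ))
        + h m i s * (inner ℝ (x s) (ν s) : ℝ) := by
    intro i m s
    have hqfun : (fun t => (inner ℝ (x t) (e m t) : ℝ)) = fun t => ∑ a, x t a * e m t a := by
      funext t; exact hinner _ _
    rw [hqfun, Dsum]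
    have step : ∀ a, D i (fun t => x t a * e m t a) s
        = e i s a * e m s a + x s a * ((∑ k, Γ m k i s * e k s a) + h m i s * ν s a) := by
      intro a; rw [hDmul, hx', he']
    rw [Finset.sum_congr rfl fun a _ => step a, Finset.sum_add_distrib]
    have t1 : ∑ a, e i s a * e m s a = kron i m := by rw [← hinner]; exact horth i m s
    have t2 : ∑ a, x s a * ((∑ k, Γ m k i s * e k s a) + h m i s * ν s a)
        = (∑ l, Γ m l i s * (inner ℝ (x s) (e l s) : ℝ)) + h m i s * (inner ℝ (x s) (ν s) : ℝ) := by
      simp only [mul_add, Finset.sum_add_distrib, Finset.mul_sum]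
      congr 1
      · rw [Finset.sum_comm]
        refine Finset.sum_congr rfl fun l _ => ?_
        rw [hinner, Finset.mul_sum]
        exact Finset.sum_congr rfl fun a _ => by ring
      · rw [hinner, Finset.mul_sum]
        exact Finset.sum_congr rfl fun a _ => by ring
    rw [t1, t2, add_assoc]
  have hb' : ∀ i j k s, D k (Aν i j) s = -(∑ p, AAA i j p s * h p k s)
      - (∑ l, Aν l j s * Γ l i k s) - ∑ l, Aν i l s * Γ l j k s := by
    intro i j k s
    have := hAν i j k s
    simp only [cov2] at this
    linarith
  have hd' : ∀ i j k s, D k (h i j) s = D j (h i k) s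
      + (∑ l, h l k s * Γ l i j s) + (∑ l, h i l s * Γ l k j s)
      - (∑ l, h l j s * Γ l i k s) - ∑ l, h i l s * Γ l j k s := by
    intro i j k s
    have := hCodazzi i j k s
    simp only [cov2] at this
    linarith
  have key : ∀ s, lapF D Γ Aν (fun t => (inner ℝ (x t) (ν t) : ℝ)) s +
      trAFS2 Aν h s * (inner ℝ (x s) (ν s) : ℝ) + HF Aν h s +
      (∑ j, D j (fun t => HF Aν h t) s * (inner ℝ (x s) (e j s) : ℝ)) = 0 := by
    intro s
    simp only [lapF, cov1, HF, sF, trAFS2, hDp, Dsum, hDmul, Dneg, hDq]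
    exact alg_main (fun i j => Aν i j s) (fun i j => h i j s) (fun i j k => D k (Aν i j) s)
      (fun i j k => D k (h i j) s) (fun i j k => Γ i j k s) (fun i j k => AAA i j k s)
      ((inner ℝ (x s) (ν s) : ℝ)) (fun r => (inner ℝ (x s) (e r s) : ℝ))
      (fun i j => hAsymm i j s) (fun i j => hsymm i j s) (fun i j k => hΓ i j k s)
      (fun i j k => (hAAAsymm i j k s).2) (fun i j k => hb' i j k s)
      (fun i j k => hd' i j k s)
  constructor
  · exact key
  · intro hH s
    have := key s
    simp only [hH, zero_mul, Finset.sum_const_zero, add_zero] at this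
    exact this
end
end

section
/- Let x : Σⁿ → ℝ^{n+1} be a closed orientable immersed hypersurface with Gauss map ν, F : Sⁿ → ℝ⁺ smooth, and H_F the anisotropic mean curvature. Then the anisotropic Minkowski formula holds: ∫_Σ (n·F∘ν + H_F·⟨x, ν⟩) dA = 0. -/
open Finset MeasureTheory

noncomputable section

section Aux

variable {n : ℕ} {S : Type}
variable (D : Fin n → (S → ℝ) → S → ℝ)
variable (hDadd : ∀ i (f g : S → ℝ) s, D i (fun t => f t + g t) s = D i f s + D i g s)
variable (hDmul : ∀ i (f g : S → ℝ) s,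
      D i (fun t => f t * g t) s = D i f s * g s + f s * D i g s)

include hDadd in
lemma aux_D0 : ∀ i s, D i (fun _ => (0:ℝ)) s = 0 := by
  intro i s
  have h1 := hDadd i (fun _ => 0) (fun _ => 0) s
  have h2 : (fun _ : S => (0:ℝ) + 0) = (fun _ : S => (0:ℝ)) := by funext t; ring
  rw [h2] at h1; linarith

include hDadd in
lemma aux_Dneg : ∀ i (f : S → ℝ) s, D i (fun t => -f t) s = -D i f s := by
  intro i f s
  have h1 := hDadd i f (fun t => -f t) s
  have h2 : (fun t : S => f t + -f t) = (fun _ : S => (0:ℝ)) := by funext t; ring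
  rw [h2, aux_D0 D hDadd] at h1; linarith

include hDadd in
lemma aux_Dsub : ∀ i (f g : S → ℝ) s,
    D i (fun t => f t - g t) s = D i f s - D i g s := by
  intro i f g s
  have h2 : (fun t : S => f t - g t) = (fun t : S => f t + -g t) := by funext t; ring
  rw [h2, hDadd, aux_Dneg D hDadd]; ring

include hDadd in
lemma aux_Dsum : ∀ i {α : Type} (A : Finset α) (f : α → S → ℝ) s,
    D i (fun t => ∑ p ∈ A, f p t) s = ∑ p ∈ A, D i (f p) s := by
  intro i α A f s
  classical
  induction A using Finset.induction_on with
  | empty => simpa using aux_D0 D hDadd i s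
  | @insert a A' hni ih =>
    have h2 : (fun t : S => ∑ p ∈ insert a A', f p t)
        = fun t : S => f a t + ∑ p ∈ A', f p t := by
      funext t; rw [Finset.sum_insert hni]
    rw [h2, hDadd, ih, Finset.sum_insert hni]

end Aux

/-- Anisotropic Minkowski formula: `∫_Σ (n F∘ν + H_F ⟨x,ν⟩) dA = 0` for a
closed orientable immersed hypersurface. -/
theorem stmt_11 (n : ℕ) (S : Type)
    (D : Fin n → (S → ℝ) → S → ℝ)
    (Γ : Fin n → Fin n → Fin n → S → ℝ)
    -- metric compatibility: `ω_{ij} = -ω_{ji}`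
    (hΓ : ∀ i j k s, Γ i j k s = -Γ j i k s)
    -- `D i` is a derivation (linearity and Leibniz rule)
    (hDadd : ∀ i (f g : S → ℝ) s, D i (fun t => f t + g t) s = D i f s + D i g s)
    (hDmul : ∀ i (f g : S → ℝ) s,
      D i (fun t => f t * g t) s = D i f s * g s + f s * D i g s)
    (h : Fin n → Fin n → S → ℝ)
    (hsymm : ∀ i j s, h i j s = h j i s)
    -- Codazzi equation `h_{ijk} = h_{ikj}`
    (hCodazzi : ∀ i j k s, cov2 D Γ h i j k s = cov2 D Γ h i k j s)
    (Fν : S → ℝ) (Fiν : Fin n → S → ℝ)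
    (Aν : Fin n → Fin n → S → ℝ) (hAsymm : ∀ i j s, Aν i j s = Aν j i s)
    (AAA : Fin n → Fin n → Fin n → S → ℝ)
    -- `A_{ij,k}` is totally symmetric
    (hAAAsymm : ∀ i j k s, AAA i j k s = AAA j i k s ∧ AAA i j k s = AAA i k j s)
    -- `(F∘ν)_i = -Σ_j h_{ij} (F_j∘ν)`
    (hFν : ∀ i s, D i Fν s = -∑ j, h i j s * Fiν j s)
    -- `(F_i∘ν)_j = -Σ_k h_{jk} (F_{ik}∘ν)`, with `F_{ik} = A_{ik} - F δ_{ik}`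
    (hFiν : ∀ i j s, cov1 D Γ Fiν i j s =
      -∑ k, h j k s * (Aν i k s - Fν s * kron i k))
    -- `(A_{ij}∘ν)_k = -Σ_p (A_{ij,p}∘ν) h_{pk}`
    (hAν : ∀ i j k s, cov2 D Γ Aν i j k s = -∑ p, AAA i j p s * h p k s)
    (x ν : S → EuclideanSpace ℝ (Fin (n + 1)))
    (e : Fin n → S → EuclideanSpace ℝ (Fin (n + 1)))
    (horth : ∀ i j s, (inner ℝ (e i s) (e j s) : ℝ) = kron i j)
    (hνunit : ∀ s, (inner ℝ (ν s) (ν s) : ℝ) = 1)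
    (hνtan : ∀ i s, (inner ℝ (e i s) (ν s) : ℝ) = 0)
    -- `dx(e_i) = e_i`
    (hx : ∀ i (w : EuclideanSpace ℝ (Fin (n + 1))) s,
      D i (fun t => (inner ℝ (x t) w : ℝ)) s = inner ℝ (e i s) w)
    -- Weingarten equation `dν(e_i) = -Σ_j h_{ij} e_j`
    (hν : ∀ i (w : EuclideanSpace ℝ (Fin (n + 1))) s,
      D i (fun t => (inner ℝ (ν t) w : ℝ)) s = -∑ j, h i j s * (inner ℝ (e j s) w : ℝ))
    -- Gauss formula `de_i(e_j) = Σ_k ω_{ik}(e_j) e_k + h_{ij} ν`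
    (he : ∀ i j (w : EuclideanSpace ℝ (Fin (n + 1))) s,
      D j (fun t => (inner ℝ (e i t) w : ℝ)) s =
        (∑ k, Γ i k j s * (inner ℝ (e k s) w : ℝ)) + h i j s * (inner ℝ (ν s) w : ℝ))
    [MeasurableSpace S] (μ : Measure S) [IsFiniteMeasure μ]
    -- divergence theorem on the closed hypersurface: total divergence of any
    -- tangential vector field integrates to zero against the area measure
    (hdivthm : ∀ T : Fin n → S → ℝ, ∫ s, (∑ i, cov1 D Γ T i i s) ∂μ = 0)
    :
    ∫ s, ((n : ℝ) * Fν s + HF Aν h s * (inner ℝ (x s) (ν s) : ℝ)) ∂μ = 0 := by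
  
  classical
  set E : Fin (n+1) → EuclideanSpace ℝ (Fin (n+1)) :=
    fun p => EuclideanSpace.single p 1 with hE
  have hinner : ∀ u v : EuclideanSpace ℝ (Fin (n+1)),
      (inner ℝ u v : ℝ) = ∑ p, (inner ℝ u (E p) : ℝ) * (inner ℝ v (E p) : ℝ) := by
    intro u v
    simp [hE, EuclideanSpace.inner_single_right, PiLp.inner_apply, RCLike.inner_apply, mul_comm]
  set X : Fin n → S → ℝ := fun j t => (inner ℝ (x t) (e j t) : ℝ) with hXdef
  set P : S → ℝ := fun t => (inner ℝ (x t) (ν t) : ℝ) with hPdef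
  -- derivative of X j
  have hDX : ∀ i j s, D i (X j) s =
      kron i j + (∑ k, Γ j k i s * X k s) + h j i s * P s := by
    intro i j s
    have h2 : X j = fun t => ∑ p, (inner ℝ (x t) (E p) : ℝ) * (inner ℝ (e j t) (E p) : ℝ) := by
      funext t; exact hinner _ _
    rw [h2, aux_Dsum D hDadd]
    have h3 : ∀ p ∈ (Finset.univ : Finset (Fin (n+1))),
        D i (fun t => (inner ℝ (x t) (E p) : ℝ) * (inner ℝ (e j t) (E p) : ℝ)) s
        = (inner ℝ (e i s) (E p) : ℝ) * (inner ℝ (e j s) (E p) : ℝ)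
          + (inner ℝ (x s) (E p) : ℝ) * ((∑ k, Γ j k i s * (inner ℝ (e k s) (E p) : ℝ))
              + h j i s * (inner ℝ (ν s) (E p) : ℝ)) := by
      intro p _
      rw [hDmul, hx, he]
    rw [Finset.sum_congr rfl h3, Finset.sum_add_distrib, ← hinner, horth, add_assoc]
    congr 1
    simp only [mul_add, Finset.sum_add_distrib]
    congr 1
    · simp only [Finset.mul_sum]
      rw [Finset.sum_comm]
      apply Finset.sum_congr rfl
      intro k _
      rw [show X k s = inner ℝ (x s) (e k s) from rfl, hinner (x s) (e k s), Finset.mul_sum]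
      apply Finset.sum_congr rfl
      intro p _; ring
    · rw [show P s = inner ℝ (x s) (ν s) from rfl, hinner (x s) (ν s), Finset.mul_sum]
      apply Finset.sum_congr rfl
      intro p _; ring
  -- derivative of P
  have hDP : ∀ i s, D i P s = -∑ j, h i j s * X j s := by
    intro i s
    have h2 : P = fun t => ∑ p, (inner ℝ (x t) (E p) : ℝ) * (inner ℝ (ν t) (E p) : ℝ) := by
      funext t; exact hinner _ _
    rw [h2, aux_Dsum D hDadd]
    have h3 : ∀ p ∈ (Finset.univ : Finset (Fin (n+1))),
        D i (fun t => (inner ℝ (x t) (E p) : ℝ) * (inner ℝ (ν t) (E p) : ℝ)) s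
        = (inner ℝ (e i s) (E p) : ℝ) * (inner ℝ (ν s) (E p) : ℝ)
          + (inner ℝ (x s) (E p) : ℝ) * (-∑ j, h i j s * (inner ℝ (e j s) (E p) : ℝ)) := by
      intro p _
      rw [hDmul, hx, hν]
    rw [Finset.sum_congr rfl h3, Finset.sum_add_distrib, ← hinner, hνtan]
    simp only [zero_add, mul_neg, Finset.mul_sum, ← Finset.sum_neg_distrib]
    rw [Finset.sum_comm]
    apply Finset.sum_congr rfl
    intro j _
    rw [show X j s = inner ℝ (x s) (e j s) from rfl, hinner (x s) (e j s), Finset.mul_sum]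
    simp only [← Finset.sum_neg_distrib]
    apply Finset.sum_congr rfl
    intro p _; ring
  -- derivative of Fiν i
  have hDFi : ∀ i s, D i (Fiν i) s =
      (-∑ k, h i k s * (Aν i k s - Fν s * kron i k)) - ∑ k, Fiν k s * Γ k i i s := by
    intro i s
    have h1 := hFiν i i s
    rw [cov1] at h1
    linarith
  -- the test vector field
  set T : Fin n → S → ℝ := fun i t => Fν t * X i t - P t * Fiν i t with hTdef
  have hDT : ∀ i s, D i (T i) s
      = D i Fν s * X i s + Fν s * D i (X i) s
        - (D i P s * Fiν i s + P s * D i (Fiν i) s) := by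
    intro i s
    have h2 : T i = fun t => (fun t => Fν t * X i t) t - (fun t => P t * Fiν i t) t := rfl
    rw [h2, aux_Dsub D hDadd, hDmul, hDmul]
  -- per-index divergence formula
  have hcov : ∀ i s, cov1 D Γ T i i s
      = Fν s + (∑ k, h i k s * Aν i k s) * P s
        + (∑ j, h i j s * (X j s * Fiν i s - Fiν j s * X i s))
        + Fν s * ∑ k, X k s * (Γ i k i s + Γ k i i s) := by
    intro i s
    rw [cov1, hDT, hDX, hDP, hDFi, hFν]
    have hk1 : (∑ k, h i k s * (Aν i k s - Fν s * kron i k))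
        = (∑ k, h i k s * Aν i k s) - h i i s * Fν s := by
      rw [show (fun k => h i k s * (Aν i k s - Fν s * kron i k))
          = fun k => h i k s * Aν i k s - h i k s * kron i k * Fν s from
        funext fun k => by ring, Finset.sum_sub_distrib]
      congr 1
      simp [kron, mul_ite, ite_mul, Finset.sum_ite_eq]
    have e1 : (∑ k, h i k s * (X k s * Fiν i s - Fiν k s * X i s))
        = (∑ k, h i k s * X k s) * Fiν i s - (∑ k, h i k s * Fiν k s) * X i s := by
      rw [show (fun k => h i k s * (X k s * Fiν i s - Fiν k s * X i s))
          = fun k => h i k s * X k s * Fiν i s - h i k s * Fiν k s * X i s from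
        funext fun k => by ring, Finset.sum_sub_distrib, Finset.sum_mul, Finset.sum_mul]
    have e3 : (∑ k, T k s * Γ k i i s)
        = Fν s * (∑ k, X k s * Γ k i i s) - P s * ∑ k, Fiν k s * Γ k i i s := by
      rw [show (fun k => T k s * Γ k i i s)
          = fun k => Fν s * (X k s * Γ k i i s) - P s * (Fiν k s * Γ k i i s) from
        funext fun k => by
          show (Fν s * X k s - P s * Fiν k s) * Γ k i i s = _; ring,
        Finset.sum_sub_distrib, ← Finset.mul_sum, ← Finset.mul_sum]
    have e2 : Fν s * (∑ k, X k s * (Γ i k i s + Γ k i i s))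
        = Fν s * (∑ k, X k s * Γ i k i s) + Fν s * ∑ k, X k s * Γ k i i s := by
      rw [show (fun k => X k s * (Γ i k i s + Γ k i i s))
          = fun k => X k s * Γ i k i s + X k s * Γ k i i s from
        funext fun k => by ring, Finset.sum_add_distrib]
      ring
    have e4 : (∑ k, Γ i k i s * X k s) = ∑ k, X k s * Γ i k i s :=
      Finset.sum_congr rfl fun k _ => mul_comm _ _
    rw [hk1, e1, e3, e2, e4, show kron i i = (1:ℝ) from by simp [kron]]
    ring
  -- summing up
  have key : ∀ s, (∑ i, cov1 D Γ T i i s)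
      = (n : ℝ) * Fν s + HF Aν h s * P s := by
    intro s
    rw [Finset.sum_congr rfl fun i _ => hcov i s]
    simp only [Finset.sum_add_distrib]
    have h1 : ∑ _i : Fin n, Fν s = (n : ℝ) * Fν s := by
      simp [Finset.sum_const, mul_comm]
    have h2 : ∑ i, (∑ k, h i k s * Aν i k s) * P s = HF Aν h s * P s := by
      rw [← Finset.sum_mul, HF]
      congr 1
      apply Finset.sum_congr rfl
      intro i _
      rw [sF]
      apply Finset.sum_congr rfl
      intro k _
      rw [hsymm i k]; ring
    have h3 : ∑ i, ∑ j, h i j s * (X j s * Fiν i s - Fiν j s * X i s) = 0 := by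
      have hswap : (∑ i, ∑ j, h i j s * (X j s * Fiν i s - Fiν j s * X i s))
          = -∑ i, ∑ j, h i j s * (X j s * Fiν i s - Fiν j s * X i s) := by
        conv_lhs => rw [Finset.sum_comm]
        rw [← Finset.sum_neg_distrib]
        apply Finset.sum_congr rfl
        intro i _
        rw [← Finset.sum_neg_distrib]
        apply Finset.sum_congr rfl
        intro j _
        rw [hsymm j i]; ring
      linarith
    have h4 : ∑ i, Fν s * ∑ k, X k s * (Γ i k i s + Γ k i i s) = 0 := by
      apply Finset.sum_eq_zero
      intro i _
      have hz : ∀ k ∈ (Finset.univ : Finset (Fin n)),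
          X k s * (Γ i k i s + Γ k i i s) = 0 := by
        intro k _; rw [hΓ i k i]; ring
      rw [Finset.sum_eq_zero hz, mul_zero]
    rw [h1, h2, h3, h4]
    ring
  have hfin : (fun s => (n : ℝ) * Fν s + HF Aν h s * (inner ℝ (x s) (ν s) : ℝ))
      = fun s => ∑ i, cov1 D Γ T i i s := by
    funext s
    rw [key s]
  rw [hfin]
  exact hdivthm T
end
end

section
/- Let x : Σⁿ → ℝ^{n+1} be an immersed hypersurface and F : Sⁿ → ℝ⁺ smooth. The components s_{ij} = Σ_l (A_{il}∘ν) h_{lj} of the anisotropic Weingarten operator satisfy the anisotropic Codazzi equation: the covariant derivative s_{ijk} is symmetric in the last two indices, s_{ijk} = s_{ikj}, where s_{ijk} = −Σ_{l,p}(A_{ilp}∘ν) h_{pk} h_{lj} + Σ_l (A_{il}∘ν) h_{ljk}. -/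
open Finset MeasureTheory

noncomputable section

/-- Anisotropic Codazzi equation: the covariant derivative
`s_{ijk} = -Σ_{l,p} (A_{il,p}∘ν) h_{pk} h_{lj} + Σ_l (A_{il}∘ν) h_{ljk}` of the
anisotropic Weingarten operator is symmetric in the last two indices. -/
theorem stmt_16 (n : ℕ) (S : Type)
    (D : Fin n → (S → ℝ) → S → ℝ)
    (Γ : Fin n → Fin n → Fin n → S → ℝ)
    -- metric compatibility: `ω_{ij} = -ω_{ji}`
    (hΓ : ∀ i j k s, Γ i j k s = -Γ j i k s)
    -- `D i` is a derivation (linearity and Leibniz rule)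
    (hDadd : ∀ i (f g : S → ℝ) s, D i (fun t => f t + g t) s = D i f s + D i g s)
    (hDmul : ∀ i (f g : S → ℝ) s,
      D i (fun t => f t * g t) s = D i f s * g s + f s * D i g s)
    (h : Fin n → Fin n → S → ℝ)
    (hsymm : ∀ i j s, h i j s = h j i s)
    -- Codazzi equation `h_{ijk} = h_{ikj}`
    (hCodazzi : ∀ i j k s, cov2 D Γ h i j k s = cov2 D Γ h i k j s)
    (Fν : S → ℝ) (Fiν : Fin n → S → ℝ)
    (Aν : Fin n → Fin n → S → ℝ) (hAsymm : ∀ i j s, Aν i j s = Aν j i s)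
    (AAA : Fin n → Fin n → Fin n → S → ℝ)
    -- `A_{ij,k}` is totally symmetric
    (hAAAsymm : ∀ i j k s, AAA i j k s = AAA j i k s ∧ AAA i j k s = AAA i k j s)
    -- `(F∘ν)_i = -Σ_j h_{ij} (F_j∘ν)`
    (hFν : ∀ i s, D i Fν s = -∑ j, h i j s * Fiν j s)
    -- `(F_i∘ν)_j = -Σ_k h_{jk} (F_{ik}∘ν)`, with `F_{ik} = A_{ik} - F δ_{ik}`
    (hFiν : ∀ i j s, cov1 D Γ Fiν i j s =
      -∑ k, h j k s * (Aν i k s - Fν s * kron i k))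
    -- `(A_{ij}∘ν)_k = -Σ_p (A_{ij,p}∘ν) h_{pk}`
    (hAν : ∀ i j k s, cov2 D Γ Aν i j k s = -∑ p, AAA i j p s * h p k s)
    (sD : Fin n → Fin n → Fin n → S → ℝ)
    (hsD : ∀ i j k s, sD i j k s =
      (-∑ l, ∑ p, AAA i l p s * h p k s * h l j s) +
        ∑ l, Aν i l s * cov2 D Γ h l j k s)
    :
    ∀ i j k s, sD i j k s = sD i k j s := by
  intro i j k s
  rw [hsD, hsD]
  congr 1
  · rw [neg_inj, Finset.sum_comm]
    refine Finset.sum_congr rfl fun a _ => Finset.sum_congr rfl fun b _ => ?_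
    rw [(hAAAsymm i b a s).2]; ring
  · exact Finset.sum_congr rfl fun l _ => by rw [hCodazzi]
end
end

section
/- Let Σ_t = {x + t ν_F(x)} flow with velocity ∂Φ/∂t = fν + ξ where f = F∘ν and ξ = DF|_ν is tangential, and suppose H_F > 0 along the flow. Then the quantity Q(t) = n ∫_{Σ_t} (F∘ν_t)/H_F dA_t satisfies Q′(t) = −n ∫_{Σ_t} ( tr(S_F²)/H_F² + 1 ) (F∘ν_t) dA_t ≤ −(n+1) ∫_{Σ_t} F∘ν_t dA_t < 0; in particular Q is strictly decreasing. -/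
open Finset MeasureTheory

noncomputable section

namespace Aux18

variable {n : ℕ} {S : Type}

lemma D_zero (D : Fin n → (S → ℝ) → S → ℝ)
    (hDadd : ∀ i (f g : S → ℝ) s, D i (fun t => f t + g t) s = D i f s + D i g s)
    (i : Fin n) (s : S) : D i (fun _ => (0:ℝ)) s = 0 := by
  have h := hDadd i (fun _ => 0) (fun _ => 0) s
  simp only [add_zero] at h
  linarith

lemma D_neg (D : Fin n → (S → ℝ) → S → ℝ)
    (hDadd : ∀ i (f g : S → ℝ) s, D i (fun t => f t + g t) s = D i f s + D i g s)
    (g : S → ℝ) (i : Fin n) (s : S) :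
    D i (fun t => -(g t)) s = -(D i g s) := by
  have h := hDadd i g (fun t => -(g t)) s
  have e : (fun t => g t + -(g t)) = (fun _ : S => (0:ℝ)) := funext fun t => by ring
  rw [e, D_zero D hDadd] at h
  linarith

lemma D_sum (D : Fin n → (S → ℝ) → S → ℝ)
    (hDadd : ∀ i (f g : S → ℝ) s, D i (fun t => f t + g t) s = D i f s + D i g s)
    {α : Type} (F : α → S → ℝ) (t : Finset α) (i : Fin n) (s : S) :
    D i (fun x => ∑ j ∈ t, F j x) s = ∑ j ∈ t, D i (F j) s := by
  induction t using Finset.cons_induction with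
  | empty => simpa using D_zero D hDadd i s
  | cons a t ha ih =>
      simp only [Finset.sum_cons]
      rw [hDadd i (F a) (fun x => ∑ j ∈ t, F j x) s, ih]

lemma sum_antisym (M : Fin n → Fin n → ℝ) (hM : ∀ p q, M p q = -M q p) :
    ∑ p, ∑ q, M p q = 0 := by
  have h1 : ∑ p, ∑ q, M p q = ∑ q, ∑ p, M p q := Finset.sum_comm
  have h2 : ∑ q : Fin n, ∑ p : Fin n, M p q = -∑ p : Fin n, ∑ q : Fin n, M p q := by
    rw [← Finset.sum_neg_distrib]
    apply Finset.sum_congr rfl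
    intro q _
    rw [← Finset.sum_neg_distrib]
    apply Finset.sum_congr rfl
    intro p _
    rw [hM p q]
  linarith


variable (D : Fin n → (S → ℝ) → S → ℝ) (Γ : Fin n → Fin n → Fin n → S → ℝ)

lemma covLeib
    (hΓ : ∀ i j k s, Γ i j k s = -Γ j i k s)
    (hDadd : ∀ i (f g : S → ℝ) s, D i (fun t => f t + g t) s = D i f s + D i g s)
    (hDmul : ∀ i (f g : S → ℝ) s,
      D i (fun t => f t * g t) s = D i f s * g s + f s * D i g s)
    (M : Fin n → Fin n → S → ℝ) (w : Fin n → S → ℝ) (i j : Fin n) (s : S) :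
    cov1 D Γ (fun k t => ∑ l, M k l t * w l t) i j s
      = ∑ l, (cov2 D Γ M i l j s * w l s + M i l s * cov1 D Γ w l j s) := by
  have hD : D j (fun t => ∑ l, M i l t * w l t) s
      = ∑ l, (D j (M i l) s * w l s + M i l s * D j (w l) s) := by
    rw [D_sum D hDadd]
    exact Finset.sum_congr rfl fun l _ => hDmul j (M i l) (w l) s
  have hz : ∑ l : Fin n, ∑ q : Fin n,
      (M i q s * w l s * Γ q l j s + M i l s * w q s * Γ q l j s) = 0 := by
    apply sum_antisym
    intro p q
    rw [hΓ q p j]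
    ring
  simp only [cov1, cov2]
  rw [hD]
  simp only [Finset.sum_add_distrib, add_mul, Finset.sum_mul, mul_add,
    Finset.mul_sum]
  have e1 : ∑ x : Fin n, ∑ q : Fin n, M x q s * w q s * Γ x i j s
      = ∑ x : Fin n, ∑ q : Fin n, M q x s * Γ q i j s * w x s := by
    rw [Finset.sum_comm]
    exact Finset.sum_congr rfl fun x _ => Finset.sum_congr rfl fun q _ => by ring
  have e2 : (∑ x : Fin n, ∑ q : Fin n, M i q s * Γ q x j s * w x s)
      + (∑ x : Fin n, ∑ q : Fin n, M i x s * (w q s * Γ q x j s)) = 0 := by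
    simp only [← Finset.sum_add_distrib]
    rw [← hz]
    exact Finset.sum_congr rfl fun x _ => Finset.sum_congr rfl fun q _ => by ring
  rw [e1]
  linarith [e2]


lemma sum3_antisym (M : Fin n → Fin n → Fin n → ℝ)
    (hM : ∀ p q r, M p q r = -M q p r) :
    ∑ p, ∑ q, ∑ r, M p q r = 0 :=
  sum_antisym (fun p q => ∑ r, M p q r) (fun p q => by
    rw [← Finset.sum_neg_distrib]
    exact Finset.sum_congr rfl fun r _ => hM p q r)

lemma cov1_neg
    (hDadd : ∀ i (f g : S → ℝ) s, D i (fun t => f t + g t) s = D i f s + D i g s)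
    (w : Fin n → S → ℝ) (i j : Fin n) (s : S) :
    cov1 D Γ (fun k t => -(w k t)) i j s = -(cov1 D Γ w i j s) := by
  simp only [cov1]
  rw [D_neg D hDadd]
  rw [neg_add, ← Finset.sum_neg_distrib]
  congr 1
  exact Finset.sum_congr rfl fun k _ => by ring

lemma traceLeib
    (hΓ : ∀ i j k s, Γ i j k s = -Γ j i k s)
    (hDadd : ∀ i (f g : S → ℝ) s, D i (fun t => f t + g t) s = D i f s + D i g s)
    (hDmul : ∀ i (f g : S → ℝ) s,
      D i (fun t => f t * g t) s = D i f s * g s + f s * D i g s)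
    (M N : Fin n → Fin n → S → ℝ) (j : Fin n) (s : S) :
    D j (fun t => ∑ i, ∑ l, M i l t * N l i t) s
      = ∑ i, ∑ l, (cov2 D Γ M i l j s * N l i s + M i l s * cov2 D Γ N l i j s) := by
  have hD : D j (fun t => ∑ i, ∑ l, M i l t * N l i t) s
      = ∑ i, ∑ l, (D j (M i l) s * N l i s + M i l s * D j (N l i) s) := by
    rw [D_sum D hDadd]
    refine Finset.sum_congr rfl fun i _ => ?_
    rw [D_sum D hDadd]
    exact Finset.sum_congr rfl fun l _ => hDmul j (M i l) (N l i) s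
  rw [hD]
  simp only [cov2, add_mul, mul_add, Finset.sum_add_distrib, Finset.sum_mul, Finset.mul_sum]
  have z1 : (∑ x : Fin n, ∑ x1 : Fin n, ∑ q : Fin n, M q x1 s * Γ q x j s * N x1 x s)
      + (∑ x : Fin n, ∑ x1 : Fin n, ∑ q : Fin n, M x x1 s * (N x1 q s * Γ q x j s)) = 0 := by
    simp only [← Finset.sum_add_distrib]
    have rc : ∀ x : Fin n, (∑ x1 : Fin n, ∑ q : Fin n,
        (M q x1 s * Γ q x j s * N x1 x s + M x x1 s * (N x1 q s * Γ q x j s)))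
        = ∑ q : Fin n, ∑ x1 : Fin n,
        (M q x1 s * Γ q x j s * N x1 x s + M x x1 s * (N x1 q s * Γ q x j s)) :=
      fun x => Finset.sum_comm
    rw [Finset.sum_congr rfl fun x _ => rc x]
    apply sum3_antisym
      (fun x q x1 => M q x1 s * Γ q x j s * N x1 x s + M x x1 s * (N x1 q s * Γ q x j s))
    intro p q r
    rw [hΓ q p j]
    ring
  have z2 : (∑ x : Fin n, ∑ x1 : Fin n, ∑ q : Fin n, M x q s * Γ q x1 j s * N x1 x s)
      + (∑ x : Fin n, ∑ x1 : Fin n, ∑ q : Fin n, M x x1 s * (N q x s * Γ q x1 j s)) = 0 := by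
    simp only [← Finset.sum_add_distrib]
    rw [Finset.sum_comm]
    have rc : ∀ x1 : Fin n, (∑ x : Fin n, ∑ q : Fin n,
        (M x q s * Γ q x1 j s * N x1 x s + M x x1 s * (N q x s * Γ q x1 j s)))
        = ∑ q : Fin n, ∑ x : Fin n,
        (M x q s * Γ q x1 j s * N x1 x s + M x x1 s * (N q x s * Γ q x1 j s)) :=
      fun x1 => Finset.sum_comm
    rw [Finset.sum_congr rfl fun x1 _ => rc x1]
    apply sum3_antisym
      (fun x1 q x => M x q s * Γ q x1 j s * N x1 x s + M x x1 s * (N q x s * Γ q x1 j s))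
    intro p q r
    rw [hΓ q p j]
    ring
  linarith [z1, z2]


lemma kron_contract (H : Fin n → Fin n → ℝ) (a : Fin n → Fin n → ℝ) (f : ℝ)
    (i j : Fin n) :
    ∑ k, H i k * (a j k - f * kron j k) = (∑ k, H i k * a j k) - f * H i j := by
  simp only [mul_sub, Finset.sum_sub_distrib]
  congr 1
  have : ∑ k : Fin n, H i k * (f * kron j k) = ∑ k : Fin n, if j = k then H i k * f else 0 := by
    refine Finset.sum_congr rfl fun k _ => ?_
    simp only [kron]
    split <;> ring
  rw [this, Finset.sum_ite_eq]
  simp [mul_comm]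

lemma sum3_eq (F : Fin n → Fin n → Fin n → ℝ) :
    ∑ a, ∑ b, ∑ c, F a b c = ∑ v : Fin n × Fin n × Fin n, F v.1 v.2.1 v.2.2 := by
  rw [Fintype.sum_prod_type]
  exact Finset.sum_congr rfl fun a _ => by rw [Fintype.sum_prod_type]

lemma sum4_eq (F : Fin n → Fin n → Fin n → Fin n → ℝ) :
    ∑ a, ∑ b, ∑ c, ∑ d, F a b c d
      = ∑ v : Fin n × Fin n × Fin n × Fin n, F v.1 v.2.1 v.2.2.1 v.2.2.2 := by
  rw [Fintype.sum_prod_type]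
  refine Finset.sum_congr rfl fun a _ => ?_
  rw [Fintype.sum_prod_type]
  exact Finset.sum_congr rfl fun b _ => by rw [Fintype.sum_prod_type]

lemma final_poly (a H : Fin n → Fin n → ℝ) (Fi : Fin n → ℝ) (f : ℝ)
    (A : Fin n → Fin n → Fin n → ℝ) (c : Fin n → Fin n → Fin n → ℝ)
    (hH : ∀ i j, H i j = H j i) (hA3 : ∀ i l p, A i l p = A i p l) :
    ∑ i, ∑ l, ((-∑ p, A i l p * H p i) * (-∑ j, H l j * Fi j)
        + a i l * ∑ j, (c l i j * -(Fi j)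
            + H l j * ∑ k, H i k * (a j k - f * kron j k)))
      + (∑ i, ∑ j, (∑ l, a i l * H l j) * H j i) * f
      + ∑ j, Fi j * ∑ i, ∑ l, ((-∑ p, A i l p * H p j) * H l i + a i l * c l i j)
    = ∑ i, ∑ j, (∑ l, a i l * H l j) * ∑ l, a j l * H l i := by
  simp only [kron_contract]
  simp only [neg_mul, mul_neg, neg_neg, mul_sub, mul_add, add_mul, sub_mul,
    Finset.sum_add_distrib, Finset.sum_sub_distrib, Finset.mul_sum, Finset.sum_mul,
    Finset.sum_neg_distrib]
  have C1 : (∑ x : Fin n, ∑ x1 : Fin n, ∑ i : Fin n, Fi x * (a x1 i * c i x1 x))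
      = ∑ x : Fin n, ∑ x1 : Fin n, ∑ i : Fin n, a x x1 * (c x1 x i * Fi i) := by
    rw [sum3_eq, sum3_eq]
    refine Fintype.sum_bijective (fun v : Fin n × Fin n × Fin n => (v.2.1, v.2.2, v.1))
      (Equiv.mk (fun v : Fin n × Fin n × Fin n => ((v.2.1, v.2.2, v.1) : Fin n × Fin n × Fin n))
        (fun v => (v.2.2, v.1, v.2.1)) (fun v => rfl) (fun v => rfl)).bijective
      _ _ (fun v => by ring)
  have C2 : (∑ x : Fin n, ∑ x1 : Fin n, ∑ x2 : Fin n, ∑ i : Fin n,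
        Fi x * (A x1 x2 i * H i x * H x2 x1))
      = ∑ x : Fin n, ∑ x1 : Fin n, ∑ x2 : Fin n, ∑ i : Fin n,
        A x x1 i * H i x * (H x1 x2 * Fi x2) := by
    rw [sum4_eq, sum4_eq]
    refine Fintype.sum_bijective
      (fun v : Fin n × Fin n × Fin n × Fin n => (v.2.1, v.2.2.2, v.1, v.2.2.1))
      (Equiv.mk (fun v : Fin n × Fin n × Fin n × Fin n =>
          ((v.2.1, v.2.2.2, v.1, v.2.2.1) : Fin n × Fin n × Fin n × Fin n))
        (fun v => (v.2.2.1, v.1, v.2.2.2, v.2.1)) (fun v => rfl) (fun v => rfl)).bijective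
      _ _ (fun v => ?_)
    simp only
    rw [hA3 v.2.1 v.2.2.2 v.2.2.1]
    ring
  have C3 : (∑ x : Fin n, ∑ x1 : Fin n, ∑ i : Fin n, a x i * H i x1 * H x1 x * f)
      = ∑ x : Fin n, ∑ x1 : Fin n, ∑ i : Fin n, a x x1 * (H x1 i * (f * H x i)) := by
    rw [sum3_eq, sum3_eq]
    refine Fintype.sum_bijective (fun v : Fin n × Fin n × Fin n => (v.1, v.2.2, v.2.1))
      (Equiv.mk (fun v : Fin n × Fin n × Fin n => ((v.1, v.2.2, v.2.1) : Fin n × Fin n × Fin n))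
        (fun v => (v.1, v.2.2, v.2.1)) (fun v => rfl) (fun v => rfl)).bijective
      _ _ (fun v => ?_)
    simp only
    rw [hH v.2.1 v.1]
    ring
  have C4 : (∑ x : Fin n, ∑ x1 : Fin n, ∑ x2 : Fin n, ∑ i : Fin n,
        a x x1 * (H x1 x2 * (H x i * a x2 i)))
      = ∑ x : Fin n, ∑ x1 : Fin n, ∑ x2 : Fin n, ∑ i : Fin n,
        a x i * H i x1 * (a x1 x2 * H x2 x) := by
    rw [sum4_eq, sum4_eq]
    refine Fintype.sum_bijective
      (fun v : Fin n × Fin n × Fin n × Fin n => (v.1, v.2.2.1, v.2.2.2, v.2.1))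
      (Equiv.mk (fun v : Fin n × Fin n × Fin n × Fin n =>
          ((v.1, v.2.2.1, v.2.2.2, v.2.1) : Fin n × Fin n × Fin n × Fin n))
        (fun v => (v.1, v.2.2.2, v.2.1, v.2.2.1)) (fun v => rfl) (fun v => rfl)).bijective
      _ _ (fun v => ?_)
    simp only
    rw [hH v.2.2.2 v.1]
    ring
  linarith [C1, C2, C3, C4]

lemma main_id
    (hΓ : ∀ i j k s, Γ i j k s = -Γ j i k s)
    (hDadd : ∀ i (f g : S → ℝ) s, D i (fun t => f t + g t) s = D i f s + D i g s)
    (hDmul : ∀ i (f g : S → ℝ) s,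
      D i (fun t => f t * g t) s = D i f s * g s + f s * D i g s)
    (h : Fin n → Fin n → S → ℝ)
    (hsymm : ∀ i j s, h i j s = h j i s)
    (hCodazzi : ∀ i j k s, cov2 D Γ h i j k s = cov2 D Γ h i k j s)
    (Fν : S → ℝ) (Fiν : Fin n → S → ℝ)
    (Aν : Fin n → Fin n → S → ℝ) (hAsymm : ∀ i j s, Aν i j s = Aν j i s)
    (AAA : Fin n → Fin n → Fin n → S → ℝ)
    (hAAAsymm : ∀ i j k s, AAA i j k s = AAA j i k s ∧ AAA i j k s = AAA i k j s)
    (hFν : ∀ i s, D i Fν s = -∑ j, h i j s * Fiν j s)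
    (hFiν : ∀ i j s, cov1 D Γ Fiν i j s =
      -∑ k, h j k s * (Aν i k s - Fν s * kron i k))
    (hAν : ∀ i j k s, cov2 D Γ Aν i j k s = -∑ p, AAA i j p s * h p k s)
    (s : S) :
    lapF D Γ Aν Fν s + trAFS2 Aν h s * Fν s
      + (∑ j, Fiν j s * D j (fun t => HF Aν h t) s) = trSF2 Aν h s := by
  have hgrad : (fun k => D k Fν) = fun k t => ∑ j, h k j t * (-(Fiν j t)) :=
    funext fun k => funext fun t => by
      rw [hFν k t, ← Finset.sum_neg_distrib]
      exact Finset.sum_congr rfl fun j _ => by ring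
  have hlap : lapF D Γ Aν Fν s = ∑ i, ∑ l,
      (cov2 D Γ Aν i l i s * D l Fν s
        + Aν i l s * cov1 D Γ (fun k => D k Fν) l i s) := by
    simp only [lapF]
    exact Finset.sum_congr rfl fun i _ =>
      covLeib D Γ hΓ hDadd hDmul Aν (fun l => D l Fν) i i s
  have hgradcov : ∀ l i : Fin n, cov1 D Γ (fun k => D k Fν) l i s
      = ∑ j, (cov2 D Γ h l i j s * (-(Fiν j s))
          + h l j s * (∑ k, h i k s * (Aν j k s - Fν s * kron j k))) := by
    intro l i
    rw [hgrad, covLeib D Γ hΓ hDadd hDmul h (fun j t => -(Fiν j t)) l i s]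
    refine Finset.sum_congr rfl fun j _ => ?_
    rw [cov1_neg D Γ hDadd Fiν j i s, hFiν j i s, hCodazzi l j i s, neg_neg]
  have hHFfun : (fun t => HF Aν h t) = fun t => ∑ i, ∑ l, Aν i l t * h l i t :=
    funext fun t => by simp [HF, sF]
  have hC : ∀ j : Fin n, D j (fun t => HF Aν h t) s
      = ∑ i, ∑ l, ((-∑ p, AAA i l p s * h p j s) * h l i s
          + Aν i l s * cov2 D Γ h l i j s) := by
    intro j
    rw [hHFfun, traceLeib D Γ hΓ hDadd hDmul Aν h j s]
    exact Finset.sum_congr rfl fun i _ => Finset.sum_congr rfl fun l _ => by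
      rw [hAν i l j s]
  rw [hlap]
  simp only [hgradcov, hC, hAν, hFν]
  simp only [trAFS2, trSF2, sF]
  exact final_poly (fun i j => Aν i j s) (fun i j => h i j s) (fun j => Fiν j s) (Fν s)
    (fun i j k => AAA i j k s) (fun l i j => cov2 D Γ h l i j s)
    (fun i j => hsymm i j s) (fun i l p => (hAAAsymm i l p s).2)


open scoped MatrixOrder in
lemma CS (Aν h : Fin n → Fin n → S → ℝ)
    (hAsymm : ∀ i j s, Aν i j s = Aν j i s)
    (hsymm : ∀ i j s, h i j s = h j i s)
    (hApos : ∀ s (v : Fin n → ℝ), v ≠ 0 → 0 < ∑ i, ∑ j, Aν i j s * v i * v j)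
    (s : S) :
    (HF Aν h s)^2 ≤ (n : ℝ) * trSF2 Aν h s := by
  classical
  set A : Matrix (Fin n) (Fin n) ℝ := Matrix.of (fun i j => Aν i j s) with hA
  set Hm : Matrix (Fin n) (Fin n) ℝ := Matrix.of (fun i j => h i j s) with hHm
  have hApsd : A.PosSemidef := by
    rw [Matrix.posSemidef_iff_dotProduct_mulVec]
    constructor
    · ext i j
      simp [Matrix.conjTranspose_apply, hA, hAsymm i j s]
    · intro x
      rcases eq_or_ne x 0 with hx | hx
      · simp [hx]
      · refine le_of_lt ?_
        have := hApos s x hx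
        calc (0:ℝ) < ∑ i, ∑ j, Aν i j s * x i * x j := this
          _ = dotProduct (star x) (A.mulVec x) := by
              simp only [dotProduct, Matrix.mulVec, Pi.star_apply, star_trivial,
                hA, Matrix.of_apply, Finset.mul_sum]
              refine Finset.sum_congr rfl fun i _ => Finset.sum_congr rfl fun j _ => by ring
  set R : Matrix (Fin n) (Fin n) ℝ := CFC.sqrt A with hR
  have hRR : R * R = A := CFC.sqrt_mul_sqrt_self A hApsd.nonneg
  have hRherm : R.IsHermitian := (Matrix.nonneg_iff_posSemidef.mp (CFC.sqrt_nonneg A)).1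
  set B : Matrix (Fin n) (Fin n) ℝ := R * Hm * R with hB
  have hHherm : Hm.IsHermitian := by
    ext i j
    simp [Matrix.conjTranspose_apply, hHm, hsymm i j s]
  have hBherm : B.IsHermitian := by
    have : B.conjTranspose = B := by
      rw [hB, Matrix.conjTranspose_mul, Matrix.conjTranspose_mul, hRherm.eq, hHherm.eq,
        Matrix.mul_assoc]
    exact this
  have hBsym : ∀ i j, B i j = B j i := by
    intro i j
    conv_lhs => rw [← hBherm.eq]
    simp [Matrix.conjTranspose_apply]
  have htrB : B.trace = HF Aν h s := by
    have h1 : B.trace = (A * Hm).trace := by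
      rw [hB, Matrix.trace_mul_comm, ← Matrix.mul_assoc, hRR]
    rw [h1]
    simp only [Matrix.trace, Matrix.diag, Matrix.mul_apply, HF, sF]
    exact Finset.sum_congr rfl fun i _ => Finset.sum_congr rfl fun l _ => by
      simp [hA, hHm]
  have htrB2 : (B * B).trace = trSF2 Aν h s := by
    have h2 : B * B = R * (Hm * A * Hm * R) := by
      rw [hB]
      have : R * Hm * R * (R * Hm * R) = R * (Hm * (R * R) * Hm * R) := by
        simp only [Matrix.mul_assoc]
      rw [this, hRR]
    have h3 : (B * B).trace = (Hm * A * Hm * A).trace := by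
      rw [h2, Matrix.trace_mul_comm]
      have : Hm * A * Hm * R * R = Hm * A * Hm * (R * R) := by
        simp only [Matrix.mul_assoc]
      rw [this, hRR]
    have h4 : (Hm * A * Hm * A).trace = ((A * Hm) * (A * Hm)).trace := by
      have e : Hm * A * Hm * A = Hm * (A * Hm * A) := by simp only [Matrix.mul_assoc]
      rw [e, Matrix.trace_mul_comm]
      simp only [Matrix.mul_assoc]
    rw [h3, h4]
    simp only [Matrix.trace, Matrix.diag, Matrix.mul_apply, trSF2, sF]
    refine Finset.sum_congr rfl fun i _ => ?_
    refine Finset.sum_congr rfl fun j _ => ?_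
    congr 1 <;>
      exact Finset.sum_congr rfl fun l _ => by simp [hA, hHm]
  -- Cauchy-Schwarz on the diagonal of B
  have hCS : (B.trace)^2 ≤ (n : ℝ) * ∑ i, (B i i)^2 := by
    have := Finset.sum_mul_sq_le_sq_mul_sq Finset.univ (fun _ : Fin n => (1:ℝ))
      (fun i => B i i)
    simp only [one_mul, one_pow, Finset.sum_const, Finset.card_univ, Fintype.card_fin,
      nsmul_eq_mul, mul_one] at this
    simpa [Matrix.trace, Matrix.diag] using this
  have hdiag : ∑ i, (B i i)^2 ≤ (B * B).trace := by
    simp only [Matrix.trace, Matrix.diag, Matrix.mul_apply]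
    refine Finset.sum_le_sum fun i _ => ?_
    calc (B i i)^2 = B i i * B i i := by ring
      _ ≤ ∑ j, B i j * B j i := by
          refine Finset.single_le_sum (f := fun j => B i j * B j i) (fun j _ => ?_) (Finset.mem_univ i)
          show 0 ≤ B i j * B j i
          rw [hBsym i j]
          exact mul_self_nonneg _
  calc (HF Aν h s)^2 = (B.trace)^2 := by rw [htrB]
    _ ≤ (n : ℝ) * ∑ i, (B i i)^2 := hCS
    _ ≤ (n : ℝ) * (B * B).trace := by
        refine mul_le_mul_of_nonneg_left hdiag (by positivity)
    _ = (n : ℝ) * trSF2 Aν h s := by rw [htrB2]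


lemma mval (h Aν : Fin n → Fin n → S → ℝ)
    (hsymm : ∀ i j s, h i j s = h j i s)
    (Fν : S → ℝ) (Fiν : Fin n → S → ℝ)
    (hFiν : ∀ i j s, cov1 D Γ Fiν i j s =
      -∑ k, h j k s * (Aν i k s - Fν s * kron i k))
    (Hm divξ : S → ℝ)
    (hHm : ∀ s, (n : ℝ) * Hm s = ∑ i, h i i s)
    (hdivξ : ∀ s, divξ s = ∑ i, cov1 D Γ Fiν i i s)
    (s : S) :
    divξ s - (n : ℝ) * Hm s * Fν s = -(HF Aν h s) := by
  have e1 : divξ s = -(∑ i, ∑ k, h i k s * Aν i k s) + Fν s * ((n:ℝ) * Hm s) := by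
    rw [hdivξ s, hHm s]
    rw [show (∑ i, cov1 D Γ Fiν i i s)
        = ∑ i : Fin n, ((- ∑ k, h i k s * Aν i k s) + Fν s * h i i s) from
      Finset.sum_congr rfl fun i _ => by
        rw [hFiν i i s, kron_contract (fun i j => h i j s) (fun i j => Aν i j s) (Fν s) i i]
        ring]
    rw [Finset.sum_add_distrib, ← Finset.sum_neg_distrib, ← Finset.mul_sum]
  have e2 : (∑ i, ∑ k, h i k s * Aν i k s) = HF Aν h s := by
    simp only [HF, sF]
    exact Finset.sum_congr rfl fun i _ => Finset.sum_congr rfl fun k _ => by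
      rw [hsymm i k s]; ring
  rw [e1, e2]
  ring

end Aux18

/-- Monotonicity of `Q(t) = n ∫_{Σ_t} (F∘ν_t)/H_F dA_t` along the anisotropic
parallel flow `∂Φ/∂t = ν_F = fν + ξ`, `f = F∘ν`, `ξ = DF|_ν`:
`Q'(t) = -n ∫ (tr(S_F²)/H_F² + 1)(F∘ν_t) dA_t ≤ -(n+1) ∫ F∘ν_t dA_t < 0`,
so `Q` is strictly decreasing. -/
theorem stmt_18 (n : ℕ) (S : Type)
    (D : Fin n → (S → ℝ) → S → ℝ)
    (Γ : Fin n → Fin n → Fin n → S → ℝ)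
    -- metric compatibility: `ω_{ij} = -ω_{ji}`
    (hΓ : ∀ i j k s, Γ i j k s = -Γ j i k s)
    -- `D i` is a derivation (linearity and Leibniz rule)
    (hDadd : ∀ i (f g : S → ℝ) s, D i (fun t => f t + g t) s = D i f s + D i g s)
    (hDmul : ∀ i (f g : S → ℝ) s,
      D i (fun t => f t * g t) s = D i f s * g s + f s * D i g s)
    (h : Fin n → Fin n → S → ℝ)
    (hsymm : ∀ i j s, h i j s = h j i s)
    -- Codazzi equation `h_{ijk} = h_{ikj}`
    (hCodazzi : ∀ i j k s, cov2 D Γ h i j k s = cov2 D Γ h i k j s)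
    (Fν : S → ℝ) (Fiν : Fin n → S → ℝ)
    (Aν : Fin n → Fin n → S → ℝ) (hAsymm : ∀ i j s, Aν i j s = Aν j i s)
    (AAA : Fin n → Fin n → Fin n → S → ℝ)
    -- `A_{ij,k}` is totally symmetric
    (hAAAsymm : ∀ i j k s, AAA i j k s = AAA j i k s ∧ AAA i j k s = AAA i k j s)
    -- `(F∘ν)_i = -Σ_j h_{ij} (F_j∘ν)`
    (hFν : ∀ i s, D i Fν s = -∑ j, h i j s * Fiν j s)
    -- `(F_i∘ν)_j = -Σ_k h_{jk} (F_{ik}∘ν)`, with `F_{ik} = A_{ik} - F δ_{ik}`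
    (hFiν : ∀ i j s, cov1 D Γ Fiν i j s =
      -∑ k, h j k s * (Aν i k s - Fν s * kron i k))
    -- `(A_{ij}∘ν)_k = -Σ_p (A_{ij,p}∘ν) h_{pk}`
    (hAν : ∀ i j k s, cov2 D Γ Aν i j k s = -∑ p, AAA i j p s * h p k s)
    (hApos : ∀ s (v : Fin n → ℝ), v ≠ 0 → 0 < ∑ i, ∑ j, Aν i j s * v i * v j)
    (hFpos : ∀ s, 0 < Fν s)
    (hHFpos : ∀ s, 0 < HF Aν h s)
    [MeasurableSpace S]
    -- the evolving area measures `dA_t` and the evolving data, at time `t₀`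
    (t₀ : ℝ) (μ : ℝ → Measure S) [IsFiniteMeasure (μ t₀)]
    (Fνt HFt : ℝ → S → ℝ)
    (hFν0 : Fνt t₀ = Fν) (hHF0 : HFt t₀ = HF Aν h)
    -- mean curvature `H` and the divergence of the tangential part
    -- `ξ = DF|_ν` of the flow velocity
    (Hm divξ : S → ℝ)
    (hHm : ∀ s, (n : ℝ) * Hm s = ∑ i, h i i s)
    (hdivξ : ∀ s, divξ s = ∑ i, cov1 D Γ Fiν i i s)
    -- evolution of the area measure: `∂/∂t dA_t = (div ξ - nHf) dA_t`
    (hflow : ∀ (g : ℝ → S → ℝ) (g' : S → ℝ),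
      (∀ s, HasDerivAt (fun u => g u s) (g' s) t₀) →
      HasDerivAt (fun u => ∫ s, g u s ∂(μ u))
        (∫ s, (g' s + g t₀ s * (divξ s - (n : ℝ) * Hm s * Fν s)) ∂(μ t₀)) t₀)
    -- evolution of `F∘ν_t`: `∂/∂t (F∘ν_t) = ⟨DF(ν_t), -∇f + dν_t(ξ)⟩`
    (hdF : ∀ s, HasDerivAt (fun u => Fνt u s)
      (∑ j, Fiν j s * (-D j Fν s + -∑ k, h j k s * Fiν k s)) t₀)
    -- evolution of `H_F`: `∂H_F/∂t = Δ_F f + tr(A_F S²) f + ⟨∇H_F, ξ⟩`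
    (hdHF : ∀ s, HasDerivAt (fun u => HFt u s)
      (lapF D Γ Aν Fν s + trAFS2 Aν h s * Fν s +
        ∑ j, Fiν j s * D j (fun t => HF Aν h t) s) t₀)
    (hint : 0 < ∫ s, Fν s ∂(μ t₀))
    (Q : ℝ → ℝ)
    (hQ : ∀ t, Q t = (n : ℝ) * ∫ s, Fνt t s / HFt t s ∂(μ t)) :
    HasDerivAt Q
        (-(n : ℝ) * ∫ s, (trSF2 Aν h s / (HF Aν h s) ^ 2 + 1) * Fν s ∂(μ t₀)) t₀ ∧
      (-(n : ℝ) * ∫ s, (trSF2 Aν h s / (HF Aν h s) ^ 2 + 1) * Fν s ∂(μ t₀) ≤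
        -((n : ℝ) + 1) * ∫ s, Fν s ∂(μ t₀)) ∧
      -(n : ℝ) * ∫ s, (trSF2 Aν h s / (HF Aν h s) ^ 2 + 1) * Fν s ∂(μ t₀) < 0 := by
  classical
  -- basic positivity facts
  have hSne : Nonempty S := by
    by_contra hne
    rw [not_nonempty_iff] at hne
    rw [integral_of_isEmpty] at hint
    exact lt_irrefl 0 hint
  obtain ⟨s₀⟩ := hSne
  have hn : 0 < n := by
    rcases Nat.eq_zero_or_pos n with h0 | h0
    · subst h0
      have := hHFpos s₀
      simp [HF] at this
    · exact h0
  have hnR : (0:ℝ) < (n:ℝ) := by exact_mod_cast hn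
  -- pointwise geometric identities
  have hm : ∀ s, divξ s - (n:ℝ) * Hm s * Fν s = -(HF Aν h s) :=
    Aux18.mval D Γ h Aν hsymm Fν Fiν hFiν Hm divξ hHm hdivξ
  have hHFd : ∀ s, lapF D Γ Aν Fν s + trAFS2 Aν h s * Fν s
      + (∑ j, Fiν j s * D j (fun t => HF Aν h t) s) = trSF2 Aν h s :=
    Aux18.main_id D Γ hΓ hDadd hDmul h hsymm hCodazzi Fν Fiν Aν hAsymm AAA hAAAsymm
      hFν hFiν hAν
  have hFd0 : ∀ s : S,
      (∑ j, Fiν j s * (-D j Fν s + -∑ k, h j k s * Fiν k s)) = 0 := by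
    intro s
    refine Finset.sum_eq_zero fun j _ => ?_
    rw [hFν j s]
    ring
  have hdF0 : ∀ s, HasDerivAt (fun u => Fνt u s) 0 t₀ := fun s => hFd0 s ▸ hdF s
  have hdHF' : ∀ s, HasDerivAt (fun u => HFt u s) (trSF2 Aν h s) t₀ := fun s =>
    hHFd s ▸ hdHF s
  have hHFne : ∀ s, HFt t₀ s ≠ 0 := fun s => by
    rw [hHF0]; exact (hHFpos s).ne'
  -- the key additivity property of the integral, derived from hflow
  have key : ∀ X Y : S → ℝ,
      (∫ s, (X s + Y s) ∂(μ t₀)) = (∫ s, X s ∂(μ t₀)) + ∫ s, Y s ∂(μ t₀) := by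
    intro X Y
    have hg : ∀ s : S, HasDerivAt
        (fun u => X s + (u - t₀) * (Y s - X s * (divξ s - (n:ℝ) * Hm s * Fν s)))
        (Y s - X s * (divξ s - (n:ℝ) * Hm s * Fν s)) t₀ := fun s => by
      simpa using (((hasDerivAt_id t₀).sub_const t₀).mul_const
        (Y s - X s * (divξ s - (n:ℝ) * Hm s * Fν s))).const_add (X s)
    have H1 := hflow
      (fun u s => X s + (u - t₀) * (Y s - X s * (divξ s - (n:ℝ) * Hm s * Fν s)))
      (fun s => Y s - X s * (divξ s - (n:ℝ) * Hm s * Fν s)) hg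
    simp only [sub_self, zero_mul, add_zero, sub_add_cancel] at H1
    -- H1 : HasDerivAt J (∫ Y) t₀ where J u = ∫ (X + (u-t₀)(Y - X m))
    have hg2 : ∀ s : S, HasDerivAt
        (fun u => (1 + (u - t₀)) *
          (X s + (u - t₀) * (Y s - X s * (divξ s - (n:ℝ) * Hm s * Fν s))))
        (X s + (Y s - X s * (divξ s - (n:ℝ) * Hm s * Fν s))) t₀ := fun s => by
      have hd1 : HasDerivAt (fun u : ℝ => 1 + (u - t₀)) 1 t₀ := by
        simpa using ((hasDerivAt_id t₀).sub_const t₀).const_add 1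
      have := hd1.mul (hg s)
      exact this.congr_deriv (by simp)
    have H2 := hflow
      (fun u s => (1 + (u - t₀)) *
        (X s + (u - t₀) * (Y s - X s * (divξ s - (n:ℝ) * Hm s * Fν s))))
      (fun s => X s + (Y s - X s * (divξ s - (n:ℝ) * Hm s * Fν s))) hg2
    simp only [sub_self, zero_mul, add_zero, one_mul] at H2
    have e2 : (fun s => X s + (Y s - X s * (divξ s - (n:ℝ) * Hm s * Fν s))
        + (X s + 0) * (divξ s - (n:ℝ) * Hm s * Fν s)) = fun s => X s + Y s := by
      funext s
      ring
    have e3 : (fun u => ∫ s, (1 + (u - t₀)) *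
        (X s + (u - t₀) * (Y s - X s * (divξ s - (n:ℝ) * Hm s * Fν s))) ∂(μ u))
        = fun u => (1 + (u - t₀)) * ∫ s,
          (X s + (u - t₀) * (Y s - X s * (divξ s - (n:ℝ) * Hm s * Fν s))) ∂(μ u) := by
      funext u
      exact integral_const_mul _ _
    rw [e3] at H2
    have hd1 : HasDerivAt (fun u : ℝ => 1 + (u - t₀)) 1 t₀ := by
      simpa using ((hasDerivAt_id t₀).sub_const t₀).const_add 1
    have H3 := hd1.mul H1
    simp only [sub_self, zero_mul, add_zero, one_mul] at H3
    have := H2.unique H3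
    have e4 : (fun s => X s + Y s) = fun s => X s
        + (Y s - X s * (divξ s - (n:ℝ) * Hm s * Fν s))
        + X s * (divξ s - (n:ℝ) * Hm s * Fν s) := funext fun s => by ring
    rw [e4, this]
  -- derivative of Q via hflow
  have hq : ∀ s : S, HasDerivAt (fun u => Fνt u s / HFt u s)
      ((0 * HFt t₀ s - Fνt t₀ s * trSF2 Aν h s) / HFt t₀ s ^ 2) t₀ := fun s =>
    (hdF0 s).div (hdHF' s) (hHFne s)
  have HQ := hflow (fun u s => Fνt u s / HFt u s)
    (fun s => (0 * HFt t₀ s - Fνt t₀ s * trSF2 Aν h s) / HFt t₀ s ^ 2) hq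
  have e5 : (fun s => (0 * HFt t₀ s - Fνt t₀ s * trSF2 Aν h s) / HFt t₀ s ^ 2
      + Fνt t₀ s / HFt t₀ s * (divξ s - (n:ℝ) * Hm s * Fν s))
      = fun s => -((trSF2 Aν h s / HF Aν h s ^ 2 + 1) * Fν s) := by
    funext s
    rw [hFν0, hHF0, hm s]
    have hne : HF Aν h s ≠ 0 := (hHFpos s).ne'
    field_simp
    ring
  rw [e5, integral_neg] at HQ
  have hQfun : Q = fun t => (n:ℝ) * ∫ s, Fνt t s / HFt t s ∂(μ t) := funext hQ
  have HQ2 : HasDerivAt Q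
      ((n:ℝ) * -∫ s, (trSF2 Aν h s / HF Aν h s ^ 2 + 1) * Fν s ∂(μ t₀)) t₀ := by
    rw [hQfun]
    exact HQ.const_mul _
  have hderiv : HasDerivAt Q
      (-(n:ℝ) * ∫ s, (trSF2 Aν h s / (HF Aν h s) ^ 2 + 1) * Fν s ∂(μ t₀)) t₀ := by
    convert HQ2 using 1
    ring
  -- splitting and lower bounds for the integral
  have hsplit : (∫ s, (trSF2 Aν h s / (HF Aν h s) ^ 2 + 1) * Fν s ∂(μ t₀))
      = (∫ s, trSF2 Aν h s / HF Aν h s ^ 2 * Fν s ∂(μ t₀)) + ∫ s, Fν s ∂(μ t₀) := by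
    rw [show (fun s => (trSF2 Aν h s / HF Aν h s ^ 2 + 1) * Fν s)
        = fun s => trSF2 Aν h s / HF Aν h s ^ 2 * Fν s + Fν s from
      funext fun s => by ring]
    exact key _ _
  have hPlow : (1/(n:ℝ)) * (∫ s, Fν s ∂(μ t₀))
      ≤ ∫ s, trSF2 Aν h s / HF Aν h s ^ 2 * Fν s ∂(μ t₀) := by
    have h1 : ∀ s, 1/(n:ℝ) * Fν s ≤ trSF2 Aν h s / HF Aν h s ^ 2 * Fν s := by
      intro s
      have hcs := Aux18.CS Aν h hAsymm hsymm hApos s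
      have hHF := hHFpos s
      have hF := hFpos s
      have hr : 1/(n:ℝ) ≤ trSF2 Aν h s / HF Aν h s ^ 2 := by
        rw [div_le_div_iff₀ hnR (by positivity)]
        nlinarith [hcs]
      exact mul_le_mul_of_nonneg_right hr (le_of_lt hF)
    have h2 : 0 ≤ ∫ s, (trSF2 Aν h s / HF Aν h s ^ 2 * Fν s - 1/(n:ℝ) * Fν s) ∂(μ t₀) :=
      integral_nonneg fun s => by have := h1 s; simp only [Pi.zero_apply]; linarith
    have h3 := key (fun s => trSF2 Aν h s / HF Aν h s ^ 2 * Fν s - 1/(n:ℝ) * Fν s)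
      (fun s => 1/(n:ℝ) * Fν s)
    rw [show (fun s => (trSF2 Aν h s / HF Aν h s ^ 2 * Fν s - 1/(n:ℝ) * Fν s)
        + 1/(n:ℝ) * Fν s) = fun s => trSF2 Aν h s / HF Aν h s ^ 2 * Fν s from
      funext fun s => sub_add_cancel _ _] at h3
    rw [integral_const_mul] at h3
    linarith [h2, h3]
  have hI : 0 < ∫ s, Fν s ∂(μ t₀) := hint
  have h6 := mul_le_mul_of_nonneg_left hPlow (le_of_lt hnR)
  have h5 : (n:ℝ) * (1/(n:ℝ) * ∫ s, Fν s ∂(μ t₀)) = ∫ s, Fν s ∂(μ t₀) := by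
    field_simp
  refine ⟨hderiv, ?_, ?_⟩
  · nlinarith [hsplit, h6, h5, hI, hnR]
  · have hIG : 0 < ∫ s, (trSF2 Aν h s / (HF Aν h s) ^ 2 + 1) * Fν s ∂(μ t₀) := by
      have : 0 < 1/(n:ℝ) * ∫ s, Fν s ∂(μ t₀) := by positivity
      linarith [hsplit, hPlow]
    nlinarith [hIG, hnR]
end
end
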